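/- arXiv:2402.09787 — 4 statements merged into one kernel-verified Lean document; each statement's English description precedes it below -/
import Mathlib

section
/- If ψ ∈ L^∞(𝕋) and φ ∈ L⁴(𝕋) is the Riesz projection of ψ (i.e. φ̂(n) = ψ̂(n) for all n ≥ 0 and φ̂(n) = 0 for all n < 0), then ‖φ‖₄ ≤ ‖ψ‖_∞. -/
open MeasureTheory Real Complex AddCircle
open ComplexConjugate ENNReal NNReal

noncomputable section

instance : Fact (0 < 2 * Real.pi) := ⟨by positivity⟩

section Aux

variable {T : ℝ} [hT : Fact (0 < T)]

theorem my_fourierCoeff_congr_ae {f g : AddCircle T → ℂ}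
    (h : f =ᵐ[haarAddCircle] g) (n : ℤ) : fourierCoeff f n = fourierCoeff g n := by
  unfold fourierCoeff
  exact integral_congr_ae (h.mono fun x hx => by simp only [hx])

theorem my_parseval {f g : AddCircle T → ℂ}
    (hf : MemLp f 2 haarAddCircle) (hg : MemLp g 2 haarAddCircle) :
    ∫ t, conj (f t) * g t ∂haarAddCircle
      = ∑' n : ℤ, conj (fourierCoeff f n) * fourierCoeff g n := by
  set F := hf.toLp f
  set G := hg.toLp g
  have h1 : (inner ℂ F G : ℂ) = ∫ t, conj (f t) * g t ∂haarAddCircle := by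
    rw [MeasureTheory.L2.inner_def]
    refine integral_congr_ae ?_
    filter_upwards [hf.coeFn_toLp, hg.coeFn_toLp] with x hx hy
    rw [hx, hy, RCLike.inner_apply, mul_comm]
  have h2 := fourierBasis.tsum_inner_mul_inner F G
  rw [← h1, ← h2]
  congr 1
  ext n
  have hF : (inner ℂ (fourierBasis (T := T) n) F : ℂ) = fourierCoeff f n := by
    rw [← fourierBasis.repr_apply_apply, fourierBasis_repr]
    exact my_fourierCoeff_congr_ae hf.coeFn_toLp n
  have hG : (inner ℂ (fourierBasis (T := T) n) G : ℂ) = fourierCoeff g n := by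
    rw [← fourierBasis.repr_apply_apply, fourierBasis_repr]
    exact my_fourierCoeff_congr_ae hg.coeFn_toLp n
  rw [← inner_conj_symm F, hF, hG]

theorem my_memℒp_conj {p : ℝ≥0∞} {f : AddCircle T → ℂ} (hf : MemLp f p haarAddCircle) :
    MemLp (fun t => conj (f t)) p haarAddCircle := by
  refine MemLp.of_le hf ?_ (Filter.Eventually.of_forall fun x => by simp)
  exact (Complex.continuous_conj.comp_aestronglyMeasurable hf.1 : _)

theorem my_memℒp_mul_fourier {p : ℝ≥0∞} {f : AddCircle T → ℂ} (hf : MemLp f p haarAddCircle)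
    (n : ℤ) : MemLp (fun t => f t * fourier n t) p haarAddCircle := by
  refine MemLp.of_le hf ?_ (Filter.Eventually.of_forall fun x => ?_)
  · exact hf.1.mul (fourier n).continuous.aestronglyMeasurable
  · have : ‖fourier n x‖ = 1 := Circle.norm_coe _
    rw [norm_mul, this, mul_one]

theorem my_integrable {f : AddCircle T → ℂ} (hf : MemLp f 2 haarAddCircle) :
    Integrable f haarAddCircle :=
  (hf.mono_exponent (by norm_num)).integrable le_rfl

theorem my_fourierCoeff_add {f g : AddCircle T → ℂ}
    (hf : Integrable f haarAddCircle) (hg : Integrable g haarAddCircle) (n : ℤ) :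
    fourierCoeff (fun t => f t + g t) n = fourierCoeff f n + fourierCoeff g n := by
  unfold fourierCoeff
  have hif : Integrable (fun t => fourier (-n) t • f t) haarAddCircle := by
    refine hf.bdd_mul ((fourier (-n)).continuous.aestronglyMeasurable : _) (c := 1) (Filter.Eventually.of_forall fun x => ?_)
    exact le_of_eq (Circle.norm_coe _)
  have hig : Integrable (fun t => fourier (-n) t • g t) haarAddCircle := by
    refine hg.bdd_mul ((fourier (-n)).continuous.aestronglyMeasurable : _) (c := 1) (Filter.Eventually.of_forall fun x => ?_)
    exact le_of_eq (Circle.norm_coe _)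
  simp_rw [smul_add]
  exact integral_add hif hig

theorem my_fourierCoeff_sub {f g : AddCircle T → ℂ}
    (hf : Integrable f haarAddCircle) (hg : Integrable g haarAddCircle) (n : ℤ) :
    fourierCoeff (fun t => f t - g t) n = fourierCoeff f n - fourierCoeff g n := by
  unfold fourierCoeff
  have hif : Integrable (fun t => fourier (-n) t • f t) haarAddCircle := by
    refine hf.bdd_mul ((fourier (-n)).continuous.aestronglyMeasurable : _) (c := 1) (Filter.Eventually.of_forall fun x => ?_)
    exact le_of_eq (Circle.norm_coe _)
  have hig : Integrable (fun t => fourier (-n) t • g t) haarAddCircle := by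
    refine hg.bdd_mul ((fourier (-n)).continuous.aestronglyMeasurable : _) (c := 1) (Filter.Eventually.of_forall fun x => ?_)
    exact le_of_eq (Circle.norm_coe _)
  simp_rw [smul_sub]
  exact integral_sub hif hig

theorem my_conv {f g : AddCircle T → ℂ}
    (hf : MemLp f 2 haarAddCircle) (hg : MemLp g 2 haarAddCircle) (n : ℤ) :
    fourierCoeff (fun t => f t * g t) n
      = ∑' k : ℤ, fourierCoeff f (n - k) * fourierCoeff g k := by
  have hh : MemLp (fun t => conj (f t) * fourier n t) 2 haarAddCircle :=
    my_memℒp_mul_fourier (my_memℒp_conj hf) n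
  have key := my_parseval hh hg
  have h1 : fourierCoeff (fun t => f t * g t) n
      = ∫ t, conj (conj (f t) * fourier n t) * g t ∂haarAddCircle := by
    unfold fourierCoeff
    refine integral_congr_ae (Filter.Eventually.of_forall fun t => ?_)
    simp only [map_mul, Complex.conj_conj, smul_eq_mul]
    rw [← fourier_neg (n := n) (x := t)]
    ring
  rw [h1, key]
  congr 1
  ext k
  have h2 : conj (fourierCoeff (fun t => conj (f t) * fourier n t) k)
      = fourierCoeff f (n - k) := by
    unfold fourierCoeff
    rw [← integral_conj]
    refine integral_congr_ae (Filter.Eventually.of_forall fun t => ?_)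
    simp only [map_mul, Complex.conj_conj, smul_eq_mul]
    have hc : ∀ m : ℤ, (conj (fourier (T := T) m t) : ℂ) = fourier (-m) t :=
      fun m => (fourier_neg (n := m) (x := t)).symm
    simp only [hc, neg_neg]
    rw [show -(n - k) = k + -n by ring, fourier_add]
    ring
  rw [h2]

theorem my_vanish_neg {f g : AddCircle T → ℂ}
    (hf : MemLp f 2 haarAddCircle) (hg : MemLp g 2 haarAddCircle)
    (hf0 : ∀ k : ℤ, k < 0 → fourierCoeff f k = 0)
    (hg0 : ∀ k : ℤ, k < 0 → fourierCoeff g k = 0)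
    {n : ℤ} (hn : n < 0) : fourierCoeff (fun t => f t * g t) n = 0 := by
  rw [my_conv hf hg n]
  have : ∀ k : ℤ, fourierCoeff f (n - k) * fourierCoeff g k = 0 := by
    intro k
    rcases lt_or_ge k 0 with hk | hk
    · rw [hg0 k hk, mul_zero]
    · rw [hf0 (n - k) (by omega), zero_mul]
  simp only [this, tsum_zero]

theorem my_norm_sq_eq {f : AddCircle T → ℂ} (hf : MemLp f 2 haarAddCircle) :
    ∫ t, ‖f t‖ ^ 2 ∂haarAddCircle = ∑' n : ℤ, ‖fourierCoeff f n‖ ^ 2 := by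
  have h := tsum_sq_fourierCoeff (hf.toLp f)
  have h1 : ∫ t, ‖(hf.toLp f : AddCircle T → ℂ) t‖ ^ 2 ∂haarAddCircle
      = ∫ t, ‖f t‖ ^ 2 ∂haarAddCircle := by
    refine integral_congr_ae ?_
    filter_upwards [hf.coeFn_toLp] with x hx
    rw [hx]
  rw [h1] at h
  rw [← h]
  congr 1
  ext n
  rw [my_fourierCoeff_congr_ae hf.coeFn_toLp n]

theorem my_vanish_nonneg {f g : AddCircle T → ℂ}
    (hf : MemLp f 2 haarAddCircle) (hg : MemLp g 2 haarAddCircle)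
    (hf0 : ∀ k : ℤ, 0 ≤ k → fourierCoeff f k = 0)
    (hg0 : ∀ k : ℤ, 0 ≤ k → fourierCoeff g k = 0)
    {n : ℤ} (hn : 0 ≤ n) : fourierCoeff (fun t => f t * g t) n = 0 := by
  rw [my_conv hf hg n]
  have : ∀ k : ℤ, fourierCoeff f (n - k) * fourierCoeff g k = 0 := by
    intro k
    rcases le_or_gt 0 k with hk | hk
    · rw [hg0 k hk, mul_zero]
    · rw [hf0 (n - k) (by omega), zero_mul]
  simp only [this, tsum_zero]

theorem enn1 : (1:ℝ≥0∞)/1 = 1/2 + 1/2 := by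
  rw [ENNReal.div_add_div_same, div_one, show (1:ℝ≥0∞)+1 = 2 by norm_num]
  exact (ENNReal.div_self two_ne_zero (by norm_num)).symm

theorem enn2 : (1:ℝ≥0∞)/2 = 1/4 + 1/4 := by
  rw [ENNReal.div_add_div_same, show (1:ℝ≥0∞)+1 = 2 by norm_num,
    show (4:ℝ≥0∞) = 2*2 by norm_num,
    ENNReal.div_eq_div_iff (a := 2*2) (b := 2) (by norm_num) (by norm_num) two_ne_zero (by norm_num)]
  ring

theorem my_memℒp_mul {𝕜 : Type*} [RCLike 𝕜] {f g : AddCircle T → 𝕜} {p q r : ℝ≥0∞}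
    (hf : MemLp f q haarAddCircle) (hg : MemLp g r haarAddCircle)
    (h : 1/p = 1/q + 1/r) : MemLp (fun t => f t * g t) p haarAddCircle := by
  haveI : ENNReal.HolderTriple q r p := ⟨by simpa only [one_div] using h.symm⟩
  exact MemLp.smul (φ := f) hg hf

theorem my_integrable_mul {𝕜 : Type*} [RCLike 𝕜] {f g : AddCircle T → 𝕜}
    (hf : MemLp f 2 haarAddCircle) (hg : MemLp g 2 haarAddCircle) :
    Integrable (fun t => f t * g t) haarAddCircle :=
  memLp_one_iff_integrable.mp
    (my_memℒp_mul hf hg enn1)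

end Aux

/-- `φ` is the Riesz projection of `ψ`: the Fourier coefficients of `φ` agree with those of `ψ`
for nonnegative indices and vanish for negative indices. -/
def IsRieszProj (ψ φ : AddCircle (2 * Real.pi) → ℂ) : Prop :=
  (∀ n : ℤ, 0 ≤ n → fourierCoeff φ n = fourierCoeff ψ n) ∧
  (∀ n : ℤ, n < 0 → fourierCoeff φ n = 0)

/-- If `ψ ∈ L^∞(𝕋)` and `φ ∈ L⁴(𝕋)` is the Riesz projection of `ψ`, then
`‖φ‖₄ ≤ ‖ψ‖_∞`. -/
theorem riesz_projection_Linfty_to_L4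
    (ψ φ : AddCircle (2 * Real.pi) → ℂ)
    (hψ : MemLp ψ ⊤ haarAddCircle) (hφ : MemLp φ 4 haarAddCircle)
    (hproj : IsRieszProj ψ φ) :
    eLpNorm φ 4 haarAddCircle ≤ eLpNorm ψ ⊤ haarAddCircle := by
  set μ : Measure (AddCircle (2 * Real.pi)) := haarAddCircle with hμdef
  set χ : AddCircle (2 * Real.pi) → ℂ := fun t => φ t - ψ t with hχdef
  -- membership facts
  have hψ4 : MemLp ψ 4 μ := hψ.mono_exponent le_top
  have hψ2 : MemLp ψ 2 μ := hψ.mono_exponent le_top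
  have hφ2 : MemLp φ 2 μ := hφ.mono_exponent (by norm_num)
  have hχ4 : MemLp χ 4 μ := hφ.sub hψ4
  have hχ2 : MemLp χ 2 μ := hχ4.mono_exponent (by norm_num)
  have harith : (1:ℝ≥0∞)/2 = 1/4 + 1/4 := enn2
  have hφφ2 : MemLp (fun t => φ t * φ t) 2 μ := my_memℒp_mul hφ hφ harith
  have hχχ2 : MemLp (fun t => χ t * χ t) 2 μ := my_memℒp_mul hχ4 hχ4 harith
  have hsum2 : MemLp (fun t => φ t + χ t) 2 μ := hφ2.add hχ2
  -- coefficients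
  have cχ : ∀ n : ℤ, fourierCoeff χ n = fourierCoeff φ n - fourierCoeff ψ n := fun n =>
    my_fourierCoeff_sub (my_integrable hφ2) (my_integrable hψ2) n
  have cχ0 : ∀ n : ℤ, 0 ≤ n → fourierCoeff χ n = 0 := fun n hn => by
    rw [cχ n, hproj.1 n hn, sub_self]
  have cφ0 : ∀ n : ℤ, n < 0 → fourierCoeff φ n = 0 := hproj.2
  -- orthogonality
  have horth : ∫ t, conj (χ t * χ t) * (φ t * φ t) ∂μ = 0 := by
    rw [my_parseval hχχ2 hφφ2]
    have hz : ∀ n : ℤ, conj (fourierCoeff (fun t => χ t * χ t) n)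
        * fourierCoeff (fun t => φ t * φ t) n = 0 := by
      intro n
      rcases lt_or_ge n 0 with hn | hn
      · rw [my_vanish_neg hφ2 hφ2 cφ0 cφ0 hn, mul_zero]
      · rw [my_vanish_nonneg hχ2 hχ2 cχ0 cχ0 hn, map_zero, zero_mul]
    simp only [hz, tsum_zero]
  have horth' : ∫ t, conj (φ t * φ t) * (χ t * χ t) ∂μ = 0 := by
    have e : ∫ t, conj (φ t * φ t) * (χ t * χ t) ∂μ
        = conj (∫ t, conj (χ t * χ t) * (φ t * φ t) ∂μ) := by
      rw [← integral_conj]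
      refine integral_congr_ae (Filter.Eventually.of_forall fun t => ?_)
      simp only [map_mul, Complex.conj_conj]
      ring
    rw [e, horth, map_zero]
  -- the essential sup bound
  set M : ℝ := (eLpNorm ψ ⊤ μ).toReal with hMdef
  have hM0 : 0 ≤ M := ENNReal.toReal_nonneg
  have hψbd : ∀ᵐ t ∂μ, ‖ψ t‖ ≤ M := by
    filter_upwards [ae_le_eLpNormEssSup (f := ψ) (μ := μ)] with t ht
    have hne : eLpNormEssSup ψ μ ≠ ⊤ := by
      rw [← eLpNorm_exponent_top]; exact hψ.2.ne
    have := ENNReal.toReal_mono hne ht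
    simpa [hMdef, eLpNorm_exponent_top] using this
  -- I4
  set I4 : ℝ := ∫ t, ‖φ t‖ ^ 4 ∂μ with hI4def
  have hI40 : 0 ≤ I4 := integral_nonneg fun t => by positivity
  -- key identity
  have hkey : (I4 : ℂ) = ∫ t, conj (φ t * φ t) * (ψ t * (φ t + χ t)) ∂μ := by
    have e1 : ∫ t, conj (φ t * φ t) * (φ t * φ t) ∂μ = (I4 : ℂ) := by
      have hpt : ∀ t, conj (φ t * φ t) * (φ t * φ t) = ((‖φ t‖ ^ 4 : ℝ) : ℂ) := fun t => by
        rw [Complex.conj_mul']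
        push_cast
        rw [norm_mul]
        push_cast
        ring
      rw [integral_congr_ae (Filter.Eventually.of_forall hpt)]
      exact integral_ofReal (𝕜 := ℂ)
    have hint1 : Integrable (fun t => conj (φ t * φ t) * (ψ t * (φ t + χ t))) μ := by
      have h1 : MemLp (fun t => conj (φ t * φ t)) 2 μ := by
        refine MemLp.of_le hφφ2 ?_ (Filter.Eventually.of_forall fun x => by simp)
        exact Complex.continuous_conj.comp_aestronglyMeasurable hφφ2.1
      have h2 : MemLp (fun t => ψ t * (φ t + χ t)) 2 μ :=
        my_memℒp_mul hψ hsum2 (by simp)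
      exact my_integrable_mul h1 h2
    have hint2 : Integrable (fun t => conj (φ t * φ t) * (χ t * χ t)) μ := by
      have h1 : MemLp (fun t => conj (φ t * φ t)) 2 μ := by
        refine MemLp.of_le hφφ2 ?_ (Filter.Eventually.of_forall fun x => by simp)
        exact Complex.continuous_conj.comp_aestronglyMeasurable hφφ2.1
      exact my_integrable_mul h1 hχχ2
    have e2 : ∫ t, conj (φ t * φ t) * (φ t * φ t) ∂μ
        = (∫ t, conj (φ t * φ t) * (ψ t * (φ t + χ t)) ∂μ)
          + ∫ t, conj (φ t * φ t) * (χ t * χ t) ∂μ := by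
      rw [← integral_add hint1 hint2]
      refine integral_congr_ae (Filter.Eventually.of_forall fun t => ?_)
      simp only [hχdef]
      ring
    rw [← e1, e2, horth', add_zero]
  -- bound via Cauchy–Schwarz
  have hnormsq4 : MemLp (fun t => ‖φ t‖ ^ 2) 2 μ := by
    have h := my_memℒp_mul (𝕜 := ℝ) hφ.norm hφ.norm harith
    have he : (fun t => ‖φ t‖ ^ 2) = fun t => ‖φ t‖ * ‖φ t‖ := by
      funext t; ring
    rw [he]; exact h
  have hplus : MemLp (fun t => ‖φ t + χ t‖) 2 μ := hsum2.norm
  have hIprod : Integrable (fun t => ‖φ t‖ ^ 2 * ‖φ t + χ t‖) μ :=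
    my_integrable_mul (𝕜 := ℝ) hnormsq4 hplus
  have hb1 : I4 ≤ M * ∫ t, ‖φ t‖ ^ 2 * ‖φ t + χ t‖ ∂μ := by
    calc I4 = ‖(I4 : ℂ)‖ := by
          rw [Complex.norm_real]
          exact (Real.norm_of_nonneg hI40).symm
      _ = ‖∫ t, conj (φ t * φ t) * (ψ t * (φ t + χ t)) ∂μ‖ := by rw [← hkey]
      _ ≤ ∫ t, ‖conj (φ t * φ t) * (ψ t * (φ t + χ t))‖ ∂μ :=
          norm_integral_le_integral_norm _
      _ ≤ ∫ t, M * (‖φ t‖ ^ 2 * ‖φ t + χ t‖) ∂μ := by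
          refine integral_mono_of_nonneg
            (Filter.Eventually.of_forall fun t => norm_nonneg _)
            (hIprod.const_mul M) ?_
          filter_upwards [hψbd] with t ht
          have he : ‖conj (φ t * φ t) * (ψ t * (φ t + χ t))‖
              = ‖ψ t‖ * (‖φ t‖ ^ 2 * ‖φ t + χ t‖) := by
            simp only [norm_mul, RCLike.norm_conj]
            ring
          rw [he]
          exact mul_le_mul_of_nonneg_right ht (by positivity)
      _ = M * ∫ t, ‖φ t‖ ^ 2 * ‖φ t + χ t‖ ∂μ := by
          rw [MeasureTheory.integral_const_mul]
  -- Cauchy-Schwarz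
  set J : ℝ := ∫ t, ‖φ t + χ t‖ ^ 2 ∂μ with hJdef
  have hJ0 : 0 ≤ J := integral_nonneg fun t => by positivity
  have hHolder : ∫ t, ‖φ t‖ ^ 2 * ‖φ t + χ t‖ ∂μ
      ≤ I4 ^ ((1:ℝ)/2) * J ^ ((1:ℝ)/2) := by
    have hconj : Real.HolderConjugate 2 2 := by constructor <;> norm_num
    have h2 : ENNReal.ofReal (2:ℝ) = 2 := by
      rw [ENNReal.ofReal_ofNat]
    have hH := integral_mul_le_Lp_mul_Lq_of_nonneg (μ := μ) hconj
      (Filter.Eventually.of_forall fun t => by positivity)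
      (Filter.Eventually.of_forall fun t => norm_nonneg _)
      (show MemLp (fun t => ‖φ t‖ ^ 2) (ENNReal.ofReal 2) μ by
        simp only [h2]; exact hnormsq4)
      (show MemLp (fun t => ‖φ t + χ t‖) (ENNReal.ofReal 2) μ by
        simp only [h2]; exact hplus)
    have e1 : ∫ t, (‖φ t‖ ^ 2) ^ (2:ℝ) ∂μ = I4 := by
      refine integral_congr_ae (Filter.Eventually.of_forall fun t => ?_)
      beta_reduce
      rw [Real.rpow_two]
      ring
    have e2 : ∫ t, ‖φ t + χ t‖ ^ (2:ℝ) ∂μ = J := by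
      refine integral_congr_ae (Filter.Eventually.of_forall fun t => ?_)
      beta_reduce
      rw [Real.rpow_two]
    beta_reduce at hH
    rw [e1, e2] at hH
    exact hH
  -- J = ‖ψ‖₂² ≤ M²
  have hJψ : J = ∫ t, ‖ψ t‖ ^ 2 ∂μ := by
    rw [hJdef, my_norm_sq_eq hsum2, my_norm_sq_eq hψ2]
    congr 1
    ext n
    have hadd : fourierCoeff (fun t => φ t + χ t) n
        = fourierCoeff φ n + fourierCoeff χ n :=
      my_fourierCoeff_add (my_integrable hφ2) (my_integrable hχ2) n
    rcases lt_or_ge n 0 with hn | hn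
    · rw [hadd, cφ0 n hn, cχ n, cφ0 n hn, zero_add, zero_sub, norm_neg]
    · rw [hadd, cχ0 n hn, add_zero, hproj.1 n hn]
  have hJM : J ≤ M ^ 2 := by
    rw [hJψ]
    have h1 : ∫ t, ‖ψ t‖ ^ 2 ∂μ ≤ ∫ _t, M ^ 2 ∂μ := by
      refine integral_mono_of_nonneg
        (Filter.Eventually.of_forall fun t => by positivity)
        (integrable_const _) ?_
      filter_upwards [hψbd] with t ht
      exact pow_le_pow_left₀ (norm_nonneg _) ht 2
    simpa using h1
  have hJhalf : J ^ ((1:ℝ)/2) ≤ M := by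
    calc J ^ ((1:ℝ)/2) ≤ (M ^ 2) ^ ((1:ℝ)/2) :=
          Real.rpow_le_rpow hJ0 hJM (by norm_num)
      _ = M := by
          rw [show (1:ℝ)/2 = (((2:ℕ)):ℝ)⁻¹ by norm_num]
          exact Real.pow_rpow_inv_natCast hM0 two_ne_zero
  -- combine
  have hS0 : 0 ≤ I4 ^ ((1:ℝ)/2) := Real.rpow_nonneg hI40 _
  have hSsq : (I4 ^ ((1:ℝ)/2)) ^ 2 = I4 := by
    rw [show (1:ℝ)/2 = (((2:ℕ)):ℝ)⁻¹ by norm_num]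
    exact Real.rpow_inv_natCast_pow hI40 two_ne_zero
  have hfinal : I4 ≤ M ^ 2 * I4 ^ ((1:ℝ)/2) := by
    calc I4 ≤ M * ∫ t, ‖φ t‖ ^ 2 * ‖φ t + χ t‖ ∂μ := hb1
      _ ≤ M * (I4 ^ ((1:ℝ)/2) * J ^ ((1:ℝ)/2)) :=
          mul_le_mul_of_nonneg_left hHolder hM0
      _ ≤ M * (I4 ^ ((1:ℝ)/2) * M) := by
          refine mul_le_mul_of_nonneg_left
            (mul_le_mul_of_nonneg_left hJhalf hS0) hM0
      _ = M ^ 2 * I4 ^ ((1:ℝ)/2) := by ring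
  have hI4M : I4 ≤ M ^ 4 := by
    nlinarith [sq_nonneg (I4 ^ ((1:ℝ)/2) - M ^ 2), hSsq, hS0, hM0, hfinal]
  -- conclude
  have h4 : eLpNorm φ 4 μ = ENNReal.ofReal (I4 ^ ((4:ℝ))⁻¹) := by
    rw [hφ.eLpNorm_eq_integral_rpow_norm (by norm_num) (by norm_num)]
    congr 1
    have ht4 : ((4:ℝ≥0∞)).toReal = (4:ℝ) := by norm_num
    rw [ht4]
    congr 1
    refine integral_congr_ae (Filter.Eventually.of_forall fun t => ?_)
    beta_reduce
    rw [← Real.rpow_natCast (‖φ t‖) 4]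
    norm_num
  have hle : I4 ^ ((4:ℝ))⁻¹ ≤ M := by
    calc I4 ^ ((4:ℝ))⁻¹ ≤ (M ^ 4) ^ ((4:ℝ))⁻¹ :=
          Real.rpow_le_rpow hI40 hI4M (by norm_num)
      _ = M := by
          rw [show ((4:ℝ))⁻¹ = (((4:ℕ)):ℝ)⁻¹ by norm_num]
          exact Real.pow_rpow_inv_natCast hM0 (by norm_num)
  rw [h4]
  calc ENNReal.ofReal (I4 ^ ((4:ℝ))⁻¹) ≤ ENNReal.ofReal M :=
        ENNReal.ofReal_le_ofReal hle
    _ = eLpNorm ψ ⊤ μ := by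
        rw [hMdef, ENNReal.ofReal_toReal hψ.2.ne]
end
end

section
/- Let ψ ∈ L^∞(𝕋) be not almost everywhere zero and let φ ∈ L⁴(𝕋) be the Riesz projection of ψ. Then ‖φ‖₄ = ‖ψ‖_∞ holds if and only if ψ̂(n) = 0 for every n < 0 and |ψ| = ‖ψ‖_∞ almost everywhere on 𝕋 (i.e. ψ is a constant multiple of an inner function). -/
open MeasureTheory Real Complex AddCircle
open scoped ComplexConjugate ENNReal NNReal

noncomputable section

namespace RieszAux

local notation "𝕋" => AddCircle (2 * Real.pi)
local notation "μ𝕋" => (haarAddCircle : Measure (AddCircle (2 * Real.pi)))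

lemma fc_congr {F G : 𝕋 → ℂ} (h : F =ᵐ[μ𝕋] G) (n : ℤ) :
    fourierCoeff F n = fourierCoeff G n :=
  integral_congr_ae (h.mono fun x hx => by simp [hx])

lemma memLp_conj {p : ℝ≥0∞} {F : 𝕋 → ℂ} (hF : MemLp F p μ𝕋) :
    MemLp (fun x => conj (F x)) p μ𝕋 := by
  refine ⟨RCLike.continuous_conj.comp_aestronglyMeasurable hF.1, ?_⟩
  have : eLpNorm (conj F) p μ𝕋 = eLpNorm F p μ𝕋 := eLpNorm_conj F p μ𝕋
  have h2 : (fun x => conj (F x)) = conj F := rfl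
  rw [h2, this]
  exact hF.2

/-- Parseval identity for the inner product of two `L²` functions. -/
lemma parseval {F G : 𝕋 → ℂ} (hF : MemLp F 2 μ𝕋) (hG : MemLp G 2 μ𝕋) :
    ∫ x, conj (F x) * G x ∂μ𝕋
      = ∑' n : ℤ, conj (fourierCoeff F n) * fourierCoeff G n := by
  have key := fourierBasis.tsum_inner_mul_inner (hF.toLp F) (hG.toLp G)
  have hrF : ∀ n : ℤ, (inner ℂ ((fourierBasis (T := 2 * Real.pi)) n) (hF.toLp F) : ℂ)
      = fourierCoeff F n := by
    intro n
    rw [← HilbertBasis.repr_apply_apply, fourierBasis_repr]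
    exact fc_congr hF.coeFn_toLp n
  have hrG : ∀ n : ℤ, (inner ℂ ((fourierBasis (T := 2 * Real.pi)) n) (hG.toLp G) : ℂ)
      = fourierCoeff G n := by
    intro n
    rw [← HilbertBasis.repr_apply_apply, fourierBasis_repr]
    exact fc_congr hG.coeFn_toLp n
  have h2 : (inner ℂ (hF.toLp F) (hG.toLp G) : ℂ) = ∫ x, conj (F x) * G x ∂μ𝕋 := by
    rw [L2.inner_def]
    refine integral_congr_ae ?_
    filter_upwards [hF.coeFn_toLp, hG.coeFn_toLp] with x hx hy
    rw [RCLike.inner_apply', hx, hy]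
  rw [← h2, ← key]
  refine tsum_congr fun n => ?_
  rw [hrG n, ← inner_conj_symm, hrF n]

lemma ae_zero_of_coeff_zero {F : 𝕋 → ℂ} (hF : MemLp F 2 μ𝕋)
    (h : ∀ n : ℤ, fourierCoeff F n = 0) : F =ᵐ[μ𝕋] 0 := by
  have h0 : hF.toLp F = 0 := by
    apply fourierBasis.repr.injective
    rw [map_zero]
    ext n
    rw [fourierBasis_repr, fc_congr hF.coeFn_toLp n, h n]
    rfl
  have := hF.coeFn_toLp
  rw [h0] at this
  exact (Lp.coeFn_zero ℂ 2 μ𝕋).symm.trans this |>.symm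

lemma memL2_of_L4 {F : 𝕋 → ℂ} (hF : MemLp F 4 μ𝕋) : MemLp F 2 μ𝕋 :=
  hF.mono_exponent (by norm_num)

lemma memL2_mul {F G : 𝕋 → ℂ} (hF : MemLp F 4 μ𝕋) (hG : MemLp G 4 μ𝕋) :
    MemLp (fun x => F x * G x) 2 μ𝕋 := by
  haveI : ENNReal.HolderTriple 4 4 2 := ⟨by
    rw [← ENNReal.toReal_eq_toReal_iff' (by simp) (by simp), ENNReal.toReal_add (by simp) (by simp)]
    norm_num⟩
  have h := hG.smul (φ := F) hF (p := 4) (q := 4) (r := 2)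
  have e : F • G = fun x => F x * G x := rfl
  rwa [e] at h

lemma integrable_mul_L2 {F G : 𝕋 → ℂ} (hF : MemLp F 2 μ𝕋) (hG : MemLp G 2 μ𝕋) :
    Integrable (fun x => F x * G x) μ𝕋 := by
  have h := hG.smul (φ := F) hF (p := 2) (q := 2) (r := 1)
  have e : F • G = fun x => F x * G x := rfl
  rw [e] at h
  exact memLp_one_iff_integrable.mp h

lemma fourierCoeff_mul_fourier (h : 𝕋 → ℂ) (n m : ℤ) :
    fourierCoeff (fun x => h x * fourier n x) m = fourierCoeff h (m - n) := by
  unfold fourierCoeff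
  refine integral_congr_ae (Filter.Eventually.of_forall fun x => ?_)
  have : (fourier (-(m - n)) : C(𝕋, ℂ)) x = fourier (-m) x * fourier n x := by
    rw [show -(m - n) = -m + n by ring, fourier_add]
  simp only [smul_eq_mul]
  rw [this]
  ring

lemma fourierCoeff_conj (u : 𝕋 → ℂ) (m : ℤ) :
    fourierCoeff (fun x => conj (u x)) m = conj (fourierCoeff u (-m)) := by
  unfold fourierCoeff
  rw [← integral_conj]
  refine integral_congr_ae (Filter.Eventually.of_forall fun x => ?_)
  simp only [smul_eq_mul, map_mul, neg_neg, fourier_neg]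

lemma integrable_fourier_smul {F : 𝕋 → ℂ} (hF : Integrable F μ𝕋) (n : ℤ) :
    Integrable (fun x => (fourier n : C(𝕋, ℂ)) x * F x) μ𝕋 :=
  hF.bdd_mul (map_continuous (fourier n)).aestronglyMeasurable
    (c := 1) (Filter.Eventually.of_forall fun x => by simp [fourier_apply, Circle.norm_coe])

lemma fourierCoeff_sub {F G : 𝕋 → ℂ} (hF : Integrable F μ𝕋) (hG : Integrable G μ𝕋) (n : ℤ) :
    fourierCoeff (F - G) n = fourierCoeff F n - fourierCoeff G n := by
  unfold fourierCoeff
  have h1 := integrable_fourier_smul hF (-n)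
  have h2 := integrable_fourier_smul hG (-n)
  simp only [smul_eq_mul]
  rw [← integral_sub h1 h2]
  refine integral_congr_ae (Filter.Eventually.of_forall fun x => ?_)
  simp [Pi.sub_apply, mul_sub]

lemma memL2_mul_fourier {h : 𝕋 → ℂ} (hh : MemLp h 2 μ𝕋) (n : ℤ) :
    MemLp (fun x => h x * fourier n x) 2 μ𝕋 := by
  have hf : MemLp (fun x => (fourier n : C(𝕋, ℂ)) x) ⊤ μ𝕋 :=
    memLp_top_of_bound (map_continuous (fourier n)).aestronglyMeasurable 1
      (Filter.Eventually.of_forall fun x => by simp [fourier_apply, Circle.norm_coe])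
  have h2 := hh.smul (φ := fun x => (fourier n : C(𝕋, ℂ)) x) hf (p := ⊤) (q := 2) (r := 2)
  have e : (fun x => (fourier n : C(𝕋, ℂ)) x) • h = fun x => h x * fourier n x := by
    funext x
    simp [mul_comm]
  rwa [e] at h2

/-- The pointwise algebraic identity underlying the Marzo–Seip argument. -/
lemma norm_sq_expand (p : ℂ) : ‖p‖ ^ 2 = p.re ^ 2 + p.im ^ 2 := by
  rw [Complex.sq_norm, Complex.normSq_apply]
  ring

lemma re_conj_mul_sq (p q : ℂ) :
    ((conj p * q) ^ 2).re
      = (p.re * q.re + p.im * q.im) ^ 2 - (p.re * q.im - p.im * q.re) ^ 2 := by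
  simp only [pow_two, Complex.mul_re, Complex.mul_im, Complex.conj_re, Complex.conj_im]
  ring

lemma re_conj_mul (p q : ℂ) :
    (conj p * q).re = p.re * q.re + p.im * q.im := by
  simp only [Complex.mul_re, Complex.conj_re, Complex.conj_im]
  ring

/-- The pointwise algebraic identity underlying the Marzo–Seip argument. -/
lemma pointwise_id (p q : ℂ) :
    ‖p‖ ^ 2 * ‖p‖ ^ 2 + (‖p + q‖ ^ 2 - ‖q‖ ^ 2) ^ 2
      = 2 * (‖p + q‖ ^ 2 * ‖p‖ ^ 2) + 2 * ((conj p * q) ^ 2).re := by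
  rw [norm_sq_expand, norm_sq_expand, norm_sq_expand, re_conj_mul_sq]
  simp only [Complex.add_re, Complex.add_im]
  ring

lemma norm_add_sq' (p q : ℂ) :
    ‖p + q‖ ^ 2 = ‖p‖ ^ 2 + 2 * (conj p * q).re + ‖q‖ ^ 2 := by
  rw [norm_sq_expand, norm_sq_expand, norm_sq_expand, re_conj_mul]
  simp only [Complex.add_re, Complex.add_im]
  ring

lemma integrable_norm_pow4 {u : 𝕋 → ℂ} (hu : MemLp u 4 μ𝕋) :
    Integrable (fun x => ‖u x‖ ^ 4) μ𝕋 := by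
  have h := hu.integrable_norm_rpow (by norm_num) (by norm_num)
  refine h.congr (Filter.Eventually.of_forall fun x => ?_)
  show ‖u x‖ ^ ((4:ℝ≥0∞).toReal) = ‖u x‖ ^ (4:ℕ)
  rw [show ((4:ℝ≥0∞).toReal) = ((4:ℕ):ℝ) by norm_num, Real.rpow_natCast]

lemma integrable_norm_sq_mul {u v : 𝕋 → ℂ} (hu : MemLp u 4 μ𝕋) (hv : MemLp v 4 μ𝕋) :
    Integrable (fun x => ‖u x‖ ^ 2 * ‖v x‖ ^ 2) μ𝕋 := by
  refine Integrable.mono' ((integrable_norm_pow4 hu).add (integrable_norm_pow4 hv))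
    ?_ (Filter.Eventually.of_forall fun x => ?_)
  · exact (((hu.1.norm.aemeasurable.pow_const 2).mul
      (hv.1.norm.aemeasurable.pow_const 2)).aestronglyMeasurable)
  · rw [Real.norm_eq_abs, _root_.abs_of_nonneg (by positivity)]
    simp only [Pi.add_apply]
    nlinarith [sq_nonneg (‖u x‖ ^ 2 - ‖v x‖ ^ 2), sq_nonneg (‖u x‖), sq_nonneg (‖v x‖)]

lemma integrable_norm_sq {u : 𝕋 → ℂ} (hu : MemLp u 2 μ𝕋) :
    Integrable (fun x => ‖u x‖ ^ 2) μ𝕋 := by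
  have h := hu.integrable_norm_rpow (by norm_num) (by norm_num)
  refine h.congr (Filter.Eventually.of_forall fun x => ?_)
  show ‖u x‖ ^ ((2:ℝ≥0∞).toReal) = ‖u x‖ ^ (2:ℕ)
  rw [show ((2:ℝ≥0∞).toReal) = ((2:ℕ):ℝ) by norm_num, Real.rpow_natCast]


section Spectral

variable {ψ φ : 𝕋 → ℂ}

lemma coeff_d_zero (hψi : Integrable ψ μ𝕋) (hφi : Integrable φ μ𝕋)
    (hproj : IsRieszProj ψ φ) {k : ℤ} (hk : 0 ≤ k) :
    fourierCoeff (ψ - φ) k = 0 := by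
  rw [fourierCoeff_sub hψi hφi, ← hproj.1 k hk, sub_self]

lemma coeff_u_zero (hψi : Integrable ψ μ𝕋) (hφi : Integrable φ μ𝕋)
    (hφ4 : MemLp φ 4 μ𝕋) (hd2 : MemLp (ψ - φ) 2 μ𝕋)
    (hproj : IsRieszProj ψ φ) {n : ℤ} (hn : n ≤ 0) :
    fourierCoeff (fun x => φ x * conj ((ψ - φ) x)) n = 0 := by
  have hg2 := memL2_of_L4 hφ4
  have step : fourierCoeff (fun x => φ x * conj ((ψ - φ) x)) n
      = ∫ x, conj ((ψ - φ) x * fourier n x) * φ x ∂μ𝕋 := by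
    unfold fourierCoeff
    refine integral_congr_ae (Filter.Eventually.of_forall fun x => ?_)
    simp only [smul_eq_mul, map_mul, ← fourier_neg]
    ring
  rw [step, parseval (memL2_mul_fourier hd2 n) hg2]
  have hterm : ∀ m : ℤ,
      conj (fourierCoeff (fun x => (ψ - φ) x * fourier n x) m) * fourierCoeff φ m = 0 := by
    intro m
    rcases lt_or_ge m 0 with hm | hm
    · rw [hproj.2 m hm, mul_zero]
    · rw [fourierCoeff_mul_fourier, coeff_d_zero hψi hφi hproj (by omega), map_zero, zero_mul]
  calc (∑' m : ℤ, conj (fourierCoeff (fun x => (ψ - φ) x * fourier n x) m) * fourierCoeff φ m)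
      = ∑' _m : ℤ, (0 : ℂ) := tsum_congr hterm
    _ = 0 := tsum_zero

lemma int_u_sq_zero (hψi : Integrable ψ μ𝕋) (hφi : Integrable φ μ𝕋)
    (hφ4 : MemLp φ 4 μ𝕋) (hd4 : MemLp (ψ - φ) 4 μ𝕋)
    (hproj : IsRieszProj ψ φ) :
    ∫ x, (φ x * conj ((ψ - φ) x)) * (φ x * conj ((ψ - φ) x)) ∂μ𝕋 = 0 := by
  have hd2 := memL2_of_L4 hd4
  have hu2 : MemLp (fun x => φ x * conj ((ψ - φ) x)) 2 μ𝕋 :=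
    memL2_mul hφ4 (memLp_conj hd4)
  have step : ∫ x, (φ x * conj ((ψ - φ) x)) * (φ x * conj ((ψ - φ) x)) ∂μ𝕋
      = ∫ x, conj (conj (φ x * conj ((ψ - φ) x))) * (φ x * conj ((ψ - φ) x)) ∂μ𝕋 := by
    refine integral_congr_ae (Filter.Eventually.of_forall fun x => ?_)
    simp only [Complex.conj_conj]
  rw [step, parseval (memLp_conj hu2) hu2]
  have hterm : ∀ m : ℤ,
      conj (fourierCoeff (fun x => conj (φ x * conj ((ψ - φ) x))) m)
        * fourierCoeff (fun x => φ x * conj ((ψ - φ) x)) m = 0 := by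
    intro m
    rw [fourierCoeff_conj, Complex.conj_conj]
    rcases le_or_gt m 0 with hm | hm
    · rw [coeff_u_zero hψi hφi hφ4 hd2 hproj hm, mul_zero]
    · rw [coeff_u_zero hψi hφi hφ4 hd2 hproj (by omega : -m ≤ 0), zero_mul]
  calc (∑' m : ℤ, conj (fourierCoeff (fun x => conj (φ x * conj ((ψ - φ) x))) m)
        * fourierCoeff (fun x => φ x * conj ((ψ - φ) x)) m)
      = ∑' _m : ℤ, (0 : ℂ) := tsum_congr hterm
    _ = 0 := tsum_zero

lemma int_conj_g_d_zero (hψi : Integrable ψ μ𝕋) (hφi : Integrable φ μ𝕋)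
    (hφ4 : MemLp φ 4 μ𝕋) (hd2 : MemLp (ψ - φ) 2 μ𝕋)
    (hproj : IsRieszProj ψ φ) :
    ∫ x, conj (φ x) * (ψ - φ) x ∂μ𝕋 = 0 := by
  rw [parseval (memL2_of_L4 hφ4) hd2]
  have hterm : ∀ m : ℤ, conj (fourierCoeff φ m) * fourierCoeff (ψ - φ) m = 0 := by
    intro m
    rcases lt_or_ge m 0 with hm | hm
    · rw [hproj.2 m hm, map_zero, zero_mul]
    · rw [coeff_d_zero hψi hφi hproj hm, mul_zero]
  calc (∑' m : ℤ, conj (fourierCoeff φ m) * fourierCoeff (ψ - φ) m)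
      = ∑' _m : ℤ, (0 : ℂ) := tsum_congr hterm
    _ = 0 := tsum_zero

end Spectral

end RieszAux

/-- For `ψ ∈ L^∞(𝕋)` not a.e. zero with Riesz projection `φ ∈ L⁴(𝕋)`, equality
`‖φ‖₄ = ‖ψ‖_∞` holds if and only if `ψ̂(n) = 0` for all `n < 0` and `|ψ| = ‖ψ‖_∞` a.e., i.e. `ψ`
is a constant multiple of an inner function. -/
theorem riesz_projection_Linfty_to_L4_equality
    (ψ φ : AddCircle (2 * Real.pi) → ℂ)
    (hψ : MemLp ψ ⊤ haarAddCircle) (hψ0 : ¬ (ψ =ᵐ[haarAddCircle] 0))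
    (hφ : MemLp φ 4 haarAddCircle)
    (hproj : IsRieszProj ψ φ) :
    eLpNorm φ 4 haarAddCircle = eLpNorm ψ ⊤ haarAddCircle ↔
      ((∀ n : ℤ, n < 0 → fourierCoeff ψ n = 0) ∧
        (∀ᵐ x ∂haarAddCircle,
          ‖ψ x‖ = (eLpNorm ψ ⊤ haarAddCircle).toReal)) := by
  have hc0 : (0:ℝ) ≤ (eLpNorm ψ ⊤ haarAddCircle).toReal := ENNReal.toReal_nonneg
  set c : ℝ := (eLpNorm ψ ⊤ haarAddCircle).toReal with hc
  have hψ4 : MemLp ψ 4 haarAddCircle := hψ.mono_exponent le_top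
  have hd4 : MemLp (ψ - φ) 4 haarAddCircle := hψ4.sub hφ
  have hg2 := RieszAux.memL2_of_L4 hφ
  have hd2 := RieszAux.memL2_of_L4 hd4
  have hψ2 := RieszAux.memL2_of_L4 hψ4
  have hψi : Integrable ψ haarAddCircle :=
    memLp_one_iff_integrable.mp (hψ.mono_exponent le_top)
  have hφi : Integrable φ haarAddCircle :=
    memLp_one_iff_integrable.mp (hφ.mono_exponent (by norm_num))
  have hbound : ∀ᵐ x ∂haarAddCircle, ‖ψ x‖ ≤ c := by
    have h1 := ae_le_eLpNormEssSup (f := ψ) (μ := haarAddCircle)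
    have hfin : eLpNormEssSup ψ haarAddCircle ≠ ⊤ := by
      rw [← eLpNorm_exponent_top]; exact hψ.2.ne
    filter_upwards [h1] with x hx
    have h2 := ENNReal.toReal_mono hfin hx
    rw [toReal_enorm] at h2
    rw [hc, eLpNorm_exponent_top]
    exact h2
  constructor
  · -- forward direction
    intro heq
    set M : ℝ := c ^ 2 with hM
    -- the two vanishing complex integrals
    have hS3 : ∫ x, conj (φ x) * (ψ - φ) x ∂haarAddCircle = 0 :=
      RieszAux.int_conj_g_d_zero hψi hφi hφ hd2 hproj
    have hS2 : ∫ x, (φ x * conj ((ψ - φ) x)) * (φ x * conj ((ψ - φ) x)) ∂haarAddCircle = 0 :=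
      RieszAux.int_u_sq_zero hψi hφi hφ hd4 hproj
    -- integrability facts
    have iuv : Integrable (fun x => conj (φ x) * (ψ - φ) x) haarAddCircle :=
      RieszAux.integrable_mul_L2 (RieszAux.memLp_conj hg2) hd2
    have hu2 : MemLp (fun x => conj (φ x) * (ψ - φ) x) 2 haarAddCircle :=
      RieszAux.memL2_mul (RieszAux.memLp_conj hφ) hd4
    have isq : Integrable
        (fun x => (conj (φ x) * (ψ - φ) x) * (conj (φ x) * (ψ - φ) x)) haarAddCircle :=
      RieszAux.integrable_mul_L2 hu2 hu2
    have isq2 : Integrable (fun x => (conj (φ x) * (ψ - φ) x) ^ 2) haarAddCircle :=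
      isq.congr (Filter.Eventually.of_forall fun x => by simp only [pow_two])
    have ir : Integrable (fun x => (conj (φ x) * (ψ - φ) x).re) haarAddCircle := by
      simpa only [RCLike.re_to_complex] using iuv.re
    have iw2 : Integrable (fun x => ((conj (φ x) * (ψ - φ) x) ^ 2).re) haarAddCircle := by
      simpa only [RCLike.re_to_complex] using isq2.re
    have ia2 : Integrable (fun x => ‖φ x‖ ^ 2 * ‖φ x‖ ^ 2) haarAddCircle :=
      RieszAux.integrable_norm_sq_mul hφ hφ
    have iFa : Integrable (fun x => ‖ψ x‖ ^ 2 * ‖φ x‖ ^ 2) haarAddCircle :=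
      RieszAux.integrable_norm_sq_mul hψ4 hφ
    have iFF : Integrable (fun x => ‖ψ x‖ ^ 2 * ‖ψ x‖ ^ 2) haarAddCircle :=
      RieszAux.integrable_norm_sq_mul hψ4 hψ4
    have iBB : Integrable (fun x => ‖(ψ - φ) x‖ ^ 2 * ‖(ψ - φ) x‖ ^ 2) haarAddCircle :=
      RieszAux.integrable_norm_sq_mul hd4 hd4
    have ia : Integrable (fun x => ‖φ x‖ ^ 2) haarAddCircle := RieszAux.integrable_norm_sq hg2
    have iB : Integrable (fun x => ‖(ψ - φ) x‖ ^ 2) haarAddCircle :=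
      RieszAux.integrable_norm_sq hd2
    have iF : Integrable (fun x => ‖ψ x‖ ^ 2) haarAddCircle := RieszAux.integrable_norm_sq hψ2
    have iR2 : Integrable (fun x => (‖ψ x‖ ^ 2 - ‖(ψ - φ) x‖ ^ 2) ^ 2) haarAddCircle := by
      refine Integrable.mono' ((iFF.const_mul 2).add (iBB.const_mul 2))
        ?_ (Filter.Eventually.of_forall fun x => ?_)
      · exact (((hψ4.1.norm.aemeasurable.pow_const 2).sub
          (hd4.1.norm.aemeasurable.pow_const 2)).pow_const 2).aestronglyMeasurable
      · rw [Real.norm_eq_abs, _root_.abs_of_nonneg (sq_nonneg _)]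
        simp only [Pi.add_apply]
        nlinarith [sq_nonneg (‖ψ x‖ ^ 2 + ‖(ψ - φ) x‖ ^ 2)]
    have iR1 : Integrable (fun x => ‖ψ x‖ ^ 2 - ‖(ψ - φ) x‖ ^ 2) haarAddCircle := by
      refine (iF.sub iB).congr (Filter.Eventually.of_forall fun x => ?_)
      simp
    -- vanishing real integrals
    have hIr : ∫ x, (conj (φ x) * (ψ - φ) x).re ∂haarAddCircle = 0 := by
      have h := integral_re iuv
      rw [hS3] at h
      simpa only [RCLike.re_to_complex, Complex.zero_re] using h
    have hIw : ∫ x, ((conj (φ x) * (ψ - φ) x) ^ 2).re ∂haarAddCircle = 0 := by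
      have hconj : ∫ x, (conj (φ x) * (ψ - φ) x) ^ 2 ∂haarAddCircle = 0 := by
        have e : (fun x => (conj (φ x) * (ψ - φ) x) ^ 2)
            = fun x => conj ((φ x * conj ((ψ - φ) x)) * (φ x * conj ((ψ - φ) x))) := by
          funext x
          simp only [pow_two, map_mul, Complex.conj_conj]
        rw [e, integral_conj, hS2, map_zero]
      have h := integral_re isq2
      rw [hconj] at h
      simpa only [RCLike.re_to_complex, Complex.zero_re] using h
    -- integrated pointwise identity (E1)
    have hsum : (∫ x, ‖φ x‖ ^ 2 * ‖φ x‖ ^ 2 ∂haarAddCircle)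
        + (∫ x, (‖ψ x‖ ^ 2 - ‖(ψ - φ) x‖ ^ 2) ^ 2 ∂haarAddCircle)
        = 2 * ∫ x, ‖ψ x‖ ^ 2 * ‖φ x‖ ^ 2 ∂haarAddCircle := by
      have hstep : ∫ x, (‖φ x‖ ^ 2 * ‖φ x‖ ^ 2 + (‖ψ x‖ ^ 2 - ‖(ψ - φ) x‖ ^ 2) ^ 2) ∂haarAddCircle
          = ∫ x, (2 * (‖ψ x‖ ^ 2 * ‖φ x‖ ^ 2)
              + 2 * ((conj (φ x) * (ψ - φ) x) ^ 2).re) ∂haarAddCircle := by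
        refine integral_congr_ae (Filter.Eventually.of_forall fun x => ?_)
        have hid := RieszAux.pointwise_id (φ x) ((ψ - φ) x)
        have hψx : φ x + (ψ - φ) x = ψ x := by simp
        rw [hψx] at hid
        exact hid
      rw [integral_add ia2 iR2, integral_add (iFa.const_mul 2) (iw2.const_mul 2),
        integral_const_mul _, integral_const_mul _, hIw, mul_zero, add_zero] at hstep
      exact hstep
    -- integrated identity (E2)
    have hsum2 : (∫ x, ‖ψ x‖ ^ 2 ∂haarAddCircle)
        = (∫ x, ‖φ x‖ ^ 2 ∂haarAddCircle) + ∫ x, ‖(ψ - φ) x‖ ^ 2 ∂haarAddCircle := by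
      have hstep : ∫ x, ‖ψ x‖ ^ 2 ∂haarAddCircle
          = ∫ x, (‖φ x‖ ^ 2 + (2 * (conj (φ x) * (ψ - φ) x).re
              + ‖(ψ - φ) x‖ ^ 2)) ∂haarAddCircle := by
        refine integral_congr_ae (Filter.Eventually.of_forall fun x => ?_)
        have hx : ψ x = φ x + (ψ - φ) x := by simp
        calc ‖ψ x‖ ^ 2 = ‖φ x + (ψ - φ) x‖ ^ 2 := by rw [← hx]
          _ = _ := by rw [RieszAux.norm_add_sq' (φ x) ((ψ - φ) x)]; ring
      have i2rB : Integrable (fun x => 2 * ((starRingEnd ℂ) (φ x) * (ψ - φ) x).re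
          + ‖(ψ - φ) x‖ ^ 2) haarAddCircle := by
        refine ((ir.const_mul 2).add iB).congr (Filter.Eventually.of_forall fun x => ?_)
        simp
      rw [integral_add ia i2rB, integral_add (ir.const_mul 2) iB,
        integral_const_mul _, hIr, mul_zero, zero_add] at hstep
      exact hstep
    -- value of ∫ ‖φ‖⁴ from the hypothesis
    have hTR : ((4:ℝ≥0∞).toReal) = (4:ℝ) := by norm_num
    have h1 := hφ.eLpNorm_eq_integral_rpow_norm (by norm_num) (by norm_num)
    rw [heq] at h1
    rw [hTR] at h1
    have hJ0 : (0:ℝ) ≤ ∫ a, ‖φ a‖ ^ (4:ℝ) ∂haarAddCircle :=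
      integral_nonneg fun x => Real.rpow_nonneg (norm_nonneg _) _
    have h2 : c = (∫ a, ‖φ a‖ ^ (4:ℝ) ∂haarAddCircle) ^ ((4:ℝ))⁻¹ := by
      rw [hc, h1, ENNReal.toReal_ofReal (Real.rpow_nonneg hJ0 _)]
    have h3 : (∫ a, ‖φ a‖ ^ (4:ℝ) ∂haarAddCircle) = c ^ 4 := by
      calc (∫ a, ‖φ a‖ ^ (4:ℝ) ∂haarAddCircle)
          = (∫ a, ‖φ a‖ ^ (4:ℝ) ∂haarAddCircle) ^ ((4:ℝ)⁻¹ * 4) := by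
            rw [inv_mul_cancel₀ (by norm_num : (4:ℝ) ≠ 0), Real.rpow_one]
        _ = ((∫ a, ‖φ a‖ ^ (4:ℝ) ∂haarAddCircle) ^ ((4:ℝ)⁻¹)) ^ (4:ℝ) :=
            Real.rpow_mul hJ0 _ _
        _ = c ^ (4:ℝ) := by rw [← h2]
        _ = c ^ (4:ℕ) := by
            rw [show (4:ℝ) = ((4:ℕ):ℝ) by norm_num, Real.rpow_natCast]
    have hX1 : ∫ x, ‖φ x‖ ^ 2 * ‖φ x‖ ^ 2 ∂haarAddCircle = c ^ 4 := by
      rw [← h3]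
      refine integral_congr_ae (Filter.Eventually.of_forall fun x => ?_)
      show ‖φ x‖ ^ 2 * ‖φ x‖ ^ 2 = ‖φ x‖ ^ (4:ℝ)
      rw [show (4:ℝ) = ((4:ℕ):ℝ) by norm_num, Real.rpow_natCast]
      ring
    -- the two nonnegative error terms
    have iI2 : Integrable (fun x => (M - (‖ψ x‖ ^ 2 - ‖(ψ - φ) x‖ ^ 2)) ^ 2) haarAddCircle := by
      refine ((((integrable_const (M ^ 2)).sub (iR1.const_mul (2 * M))).add iR2).congr
        (Filter.Eventually.of_forall fun x => ?_))
      simp only [Pi.add_apply, Pi.sub_apply]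
      ring
    have hI2 : ∫ x, (M - (‖ψ x‖ ^ 2 - ‖(ψ - φ) x‖ ^ 2)) ^ 2 ∂haarAddCircle
        = M ^ 2 - 2 * M * ((∫ x, ‖ψ x‖ ^ 2 ∂haarAddCircle)
            - ∫ x, ‖(ψ - φ) x‖ ^ 2 ∂haarAddCircle)
          + ∫ x, (‖ψ x‖ ^ 2 - ‖(ψ - φ) x‖ ^ 2) ^ 2 ∂haarAddCircle := by
      have e : (fun x => (M - (‖ψ x‖ ^ 2 - ‖(ψ - φ) x‖ ^ 2)) ^ 2)
          = fun x => (M ^ 2 - 2 * M * (‖ψ x‖ ^ 2 - ‖(ψ - φ) x‖ ^ 2))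
              + (‖ψ x‖ ^ 2 - ‖(ψ - φ) x‖ ^ 2) ^ 2 := by
        funext x; ring
      have iMR : Integrable (fun x => M ^ 2
          - 2 * M * (‖ψ x‖ ^ 2 - ‖(ψ - φ) x‖ ^ 2)) haarAddCircle := by
        refine ((integrable_const (M ^ 2)).sub (iR1.const_mul (2 * M))).congr
          (Filter.Eventually.of_forall fun x => ?_)
        simp
      rw [e, integral_add iMR iR2,
        integral_sub (integrable_const (M ^ 2)) (iR1.const_mul (2 * M)),
        integral_const_mul _, integral_sub iF iB, integral_const]
      simp [measure_univ]
    have hI3 : ∫ x, (M - ‖ψ x‖ ^ 2) * ‖φ x‖ ^ 2 ∂haarAddCircle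
        = M * (∫ x, ‖φ x‖ ^ 2 ∂haarAddCircle) - ∫ x, ‖ψ x‖ ^ 2 * ‖φ x‖ ^ 2 ∂haarAddCircle := by
      have e : (fun x => (M - ‖ψ x‖ ^ 2) * ‖φ x‖ ^ 2)
          = fun x => M * ‖φ x‖ ^ 2 - ‖ψ x‖ ^ 2 * ‖φ x‖ ^ 2 := by
        funext x; ring
      rw [e, integral_sub (ia.const_mul M) iFa, integral_const_mul _]
    have hI3nonneg : 0 ≤ ∫ x, (M - ‖ψ x‖ ^ 2) * ‖φ x‖ ^ 2 ∂haarAddCircle := by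
      refine integral_nonneg_of_ae ?_
      filter_upwards [hbound] with x hx
      have hFx : ‖ψ x‖ ^ 2 ≤ M := by
        rw [hM]; nlinarith [norm_nonneg (ψ x)]
      exact mul_nonneg (by linarith) (sq_nonneg _)
    have hI2nonneg : 0 ≤ ∫ x, (M - (‖ψ x‖ ^ 2 - ‖(ψ - φ) x‖ ^ 2)) ^ 2 ∂haarAddCircle :=
      integral_nonneg fun x => sq_nonneg _
    -- conclude I2 = 0
    have hMsq : M ^ 2 = c ^ 4 := by rw [hM]; ring
    have hI2zero : ∫ x, (M - (‖ψ x‖ ^ 2 - ‖(ψ - φ) x‖ ^ 2)) ^ 2 ∂haarAddCircle = 0 := by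
      have h56 : (∫ x, ‖ψ x‖ ^ 2 ∂haarAddCircle) - (∫ x, ‖(ψ - φ) x‖ ^ 2 ∂haarAddCircle)
          = ∫ x, ‖φ x‖ ^ 2 ∂haarAddCircle := by linarith
      rw [h56] at hI2
      linarith [hI2, hI3, hsum, hX1, hMsq, hI2nonneg, hI3nonneg]
    have haeI2 := (integral_eq_zero_iff_of_nonneg (fun x => sq_nonneg _) iI2).mp hI2zero
    -- extract pointwise information
    have hkey : ∀ᵐ x ∂haarAddCircle, ψ x = φ x ∧ ‖ψ x‖ = c := by
      filter_upwards [haeI2, hbound] with x h1 h2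
      have h1' : (M - (‖ψ x‖ ^ 2 - ‖(ψ - φ) x‖ ^ 2)) ^ 2 = 0 := by simpa using h1
      have h1'' : ‖ψ x‖ ^ 2 - ‖(ψ - φ) x‖ ^ 2 = M := by
        have := pow_eq_zero_iff (n := 2) (by norm_num) |>.mp h1'
        linarith
      have hFx : ‖ψ x‖ ^ 2 ≤ M := by
        rw [hM]; nlinarith [norm_nonneg (ψ x)]
      have hBx0 : ‖(ψ - φ) x‖ ^ 2 = 0 := by
        have := sq_nonneg (‖(ψ - φ) x‖)
        linarith
      have hd0 : (ψ - φ) x = 0 := by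
        have := pow_eq_zero_iff (n := 2) (by norm_num) |>.mp hBx0
        exact norm_eq_zero.mp this
      have hψφx : ψ x = φ x := by
        have : ψ x - φ x = 0 := hd0
        exact sub_eq_zero.mp this
      refine ⟨hψφx, ?_⟩
      have hFxM : ‖ψ x‖ ^ 2 = M := by
        rw [← h1'', hBx0]; ring
      have : ‖ψ x‖ = c := by
        rw [← Real.sqrt_sq (norm_nonneg (ψ x)), hFxM, hM, Real.sqrt_sq hc0]
      exact this
    have hψφae : ψ =ᵐ[haarAddCircle] φ := by
      filter_upwards [hkey] with x hx using hx.1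
    refine ⟨fun n hn => ?_, ?_⟩
    · rw [RieszAux.fc_congr hψφae n, hproj.2 n hn]
    · filter_upwards [hkey] with x hx using hx.2
  · -- backward direction
    rintro ⟨hcoeff, habs⟩
    have hhc : ∀ n : ℤ, fourierCoeff (ψ - φ) n = 0 := by
      intro n
      rw [RieszAux.fourierCoeff_sub hψi hφi]
      rcases lt_or_ge n 0 with hn | hn
      · rw [hcoeff n hn, hproj.2 n hn, sub_zero]
      · rw [← hproj.1 n hn, sub_self]
    have hae : (ψ - φ) =ᵐ[haarAddCircle] 0 := RieszAux.ae_zero_of_coeff_zero hd2 hhc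
    have hψφ : ψ =ᵐ[haarAddCircle] φ := by
      filter_upwards [hae] with x hx
      have hx' : ψ x - φ x = 0 := hx
      exact sub_eq_zero.mp hx'
    have h4 : eLpNorm φ 4 haarAddCircle = eLpNorm ψ 4 haarAddCircle :=
      eLpNorm_congr_ae hψφ.symm
    have h5 : eLpNorm ψ 4 haarAddCircle
        = eLpNorm (fun _ : AddCircle (2 * Real.pi) => (c:ℂ)) 4 haarAddCircle := by
      refine eLpNorm_congr_norm_ae ?_
      filter_upwards [habs] with x hx
      rw [hx]
      simp [_root_.abs_of_nonneg hc0]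
    have h6 : eLpNorm (fun _ : AddCircle (2 * Real.pi) => (c:ℂ)) 4 haarAddCircle
        = ENNReal.ofReal c := by
      rw [eLpNorm_const _ (by norm_num) (IsProbabilityMeasure.ne_zero _)]
      rw [measure_univ]
      simp only [ENNReal.one_rpow, mul_one]
      rw [← ofReal_norm]
      simp [_root_.abs_of_nonneg hc0]
    have h7 : ENNReal.ofReal c = eLpNorm ψ ⊤ haarAddCircle := by
      rw [hc]
      exact ENNReal.ofReal_toReal hψ.2.ne
    rw [h4, h5, h6, h7]
end
end

section
/- Let s ≥ 1 be a real number with s ≠ 2, let p = 4/s, and let w be a complex number with 0 < |w| < 1. Then the inequality is strict: (1/2π) ∫₀^{2π} |1 − w̄ e^{iθ}|^{−p} dθ < (1 − |w|²)^{−p/s}. (For s = 2, i.e. p = 2, equality holds for every w.) -/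
open MeasureTheory Real Complex

noncomputable section

def bc (t : ℝ) (n : ℕ) : ℝ := (∏ k ∈ Finset.range n, (t + k)) / n.factorial

lemma bc_pos {t : ℝ} (ht : 0 < t) (n : ℕ) : 0 < bc t n := by
  apply div_pos
  · exact Finset.prod_pos fun k _ => by positivity
  · exact_mod_cast n.factorial_pos

lemma hasDerivAt_one_sub_cpow (c : ℂ) {z : ℂ} (hz : 0 < (1 - z).re) :
    HasDerivAt (fun z : ℂ => (1 - z) ^ c) (-c * (1 - z) ^ (c - 1)) z := by
  have h1 : HasDerivAt (fun z : ℂ => 1 - z) (-1) z := by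
    simpa using (hasDerivAt_id z).const_sub 1
  have h2 := h1.cpow_const (c := c) (Or.inl hz)
  convert h2 using 1
  ring

lemma iteratedDeriv_one_sub_cpow (t : ℝ) (n : ℕ) {z : ℂ} (hz : ‖z‖ < 1) :
    iteratedDeriv n (fun z : ℂ => (1 - z) ^ (-(t : ℂ))) z
      = (∏ k ∈ Finset.range n, ((t : ℂ) + k)) * (1 - z) ^ (-(t : ℂ) - n) := by
  induction n generalizing z with
  | zero => simp
  | succ n ih =>
    have hmem : z ∈ Metric.ball (0:ℂ) 1 := by simpa [Metric.mem_ball] using hz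
    have hre : ∀ y : ℂ, ‖y‖ < 1 → 0 < (1 - y).re := by
      intro y hy
      have : y.re ≤ ‖y‖ := Complex.re_le_norm y
      simp only [Complex.sub_re, Complex.one_re]
      linarith
    rw [iteratedDeriv_succ]
    have hev : (fun y => iteratedDeriv n (fun z : ℂ => (1 - z) ^ (-(t : ℂ))) y)
        =ᶠ[nhds z] fun y => (∏ k ∈ Finset.range n, ((t : ℂ) + k)) * (1 - y) ^ (-(t : ℂ) - n) := by
      filter_upwards [Metric.ball_mem_nhds z (by linarith : (0:ℝ) < 1 - ‖z‖)] with y hy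
      apply ih
      have : dist y z < 1 - ‖z‖ := hy
      have := dist_triangle y z 0
      simp only [dist_zero_right] at this ⊢
      calc ‖y‖ ≤ dist y z + ‖z‖ := by simpa [dist_eq_norm] using this
        _ < 1 := by linarith
    rw [hev.deriv_eq]
    have hd := (hasDerivAt_one_sub_cpow (-(t:ℂ) - n) (hre z hz)).const_mul
      (∏ k ∈ Finset.range n, ((t : ℂ) + k))
    rw [hd.deriv, Finset.prod_range_succ]
    push_cast
    rw [show -(t:ℂ) - ((n:ℂ) + 1) = -(t:ℂ) - (n:ℂ) - 1 by ring]
    ring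

lemma hasSum_binomial (t : ℝ) {z : ℂ} (hz : ‖z‖ < 1) :
    HasSum (fun n => (bc t n : ℂ) * z ^ n) ((1 - z) ^ (-(t : ℂ))) := by
  have hdiff : DifferentiableOn ℂ (fun z : ℂ => (1 - z) ^ (-(t : ℂ))) (Metric.ball 0 1) := by
    intro y hy
    have hy' : ‖y‖ < 1 := by simpa [Metric.mem_ball] using hy
    have : y.re ≤ ‖y‖ := Complex.re_le_norm y
    have hre : 0 < (1 - y).re := by
      simp only [Complex.sub_re, Complex.one_re]; linarith
    exact ((hasDerivAt_one_sub_cpow (-(t:ℂ)) hre).differentiableAt).differentiableWithinAt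
  have H := Complex.hasSum_taylorSeries_on_ball hdiff (by simpa [Metric.mem_ball] using hz)
  have h0 : ∀ n : ℕ, iteratedDeriv n (fun z : ℂ => (1 - z) ^ (-(t : ℂ))) 0
      = (∏ k ∈ Finset.range n, ((t : ℂ) + k)) := by
    intro n
    rw [iteratedDeriv_one_sub_cpow t n (by simp)]
    simp
  convert H using 2 with n
  · rfl
  rw [h0 n]
  simp only [bc, smul_eq_mul, sub_zero]
  push_cast
  field_simp

lemma hasSum_binomial_real (t : ℝ) {x : ℝ} (hx : |x| < 1) :
    HasSum (fun n => bc t n * x ^ n) ((1 - x) ^ (-t)) := by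
  have hz : ‖(x : ℂ)‖ < 1 := by simpa using hx
  have H := hasSum_binomial t hz
  have hx1 : (0:ℝ) < 1 - x := by
    have := abs_lt.mp hx; linarith [this.2]
  have heq : ((1 : ℂ) - (x : ℂ)) ^ (-(t : ℂ)) = (((1 - x) ^ (-t) : ℝ) : ℂ) := by
    rw [Complex.ofReal_cpow hx1.le]
    push_cast
    ring_nf
  rw [heq] at H
  rw [← Complex.hasSum_ofReal]
  convert H using 2 with n
  push_cast
  ring

lemma bc_sq_le {a : ℝ} (ha : 0 < a) (n : ℕ) : (bc a n) ^ 2 ≤ bc (a ^ 2) n := by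
  have hfac : (0:ℝ) < n.factorial := by exact_mod_cast n.factorial_pos
  rw [bc, bc, div_pow, div_le_div_iff₀ (by positivity) hfac]
  have hkey : (∏ k ∈ Finset.range n, (a + k)) ^ 2
      ≤ ∏ k ∈ Finset.range n, ((a ^ 2 + k) * (k + 1)) := by
    rw [← Finset.prod_pow]
    apply Finset.prod_le_prod
    · intro k _; positivity
    · intro k _
      have : (0:ℝ) ≤ k := Nat.cast_nonneg k
      nlinarith [sq_nonneg (a - 1)]
  calc (∏ k ∈ Finset.range n, (a + k)) ^ 2 * (n.factorial : ℝ)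
      ≤ (∏ k ∈ Finset.range n, ((a ^ 2 + k) * (k + 1))) * n.factorial := by
        exact mul_le_mul_of_nonneg_right hkey hfac.le
    _ = (∏ k ∈ Finset.range n, (a ^ 2 + k)) * ((n.factorial : ℝ) ^ 2) := by
        rw [Finset.prod_mul_distrib]
        have : (∏ k ∈ Finset.range n, ((k : ℝ) + 1)) = (n.factorial : ℝ) := by
          rw [← Finset.prod_range_add_one_eq_factorial]
          push_cast
          rfl
        rw [this]; ring

lemma bc_sq_lt_two {a : ℝ} (ha : 0 < a) (ha1 : a ≠ 1) : (bc a 2) ^ 2 < bc (a ^ 2) 2 := by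
  have h2 : bc a 2 = a * (a + 1) / 2 := by
    simp [bc, Finset.prod_range_succ]
  have h3 : bc (a ^ 2) 2 = a ^ 2 * (a ^ 2 + 1) / 2 := by
    simp [bc, Finset.prod_range_succ]
  rw [h2, h3]
  have hne : a - 1 ≠ 0 := sub_ne_zero.mpr ha1
  have hgt : (a - 1) ^ 2 > 0 := by positivity
  nlinarith [mul_pos (pow_pos ha 2) hgt]

lemma integral_exp_int_mul (k : ℤ) :
    ∫ θ in (0:ℝ)..(2*π), Complex.exp ((k:ℂ) * θ * I) = if k = 0 then (2*π:ℂ) else 0 := by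
  rcases eq_or_ne k 0 with rfl | hk
  · simp
  · rw [if_neg hk]
    have hc : ((k:ℂ) * I) ≠ 0 := by
      simp [Complex.ext_iff, hk]
    have := integral_exp_mul_complex (a := 0) (b := 2*π) hc
    have heq : ∀ θ:ℝ, Complex.exp ((k:ℂ) * θ * I) = Complex.exp (((k:ℂ) * I) * θ) := by
      intro θ; ring_nf
    simp_rw [heq]
    rw [this]
    have h1 : Complex.exp ((k:ℂ) * I * (2*π:ℝ)) = 1 := by
      push_cast
      rw [show (k:ℂ) * I * (2*π) = (k:ℂ) * (2 * (π:ℂ) * I) by ring]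
      exact Complex.exp_int_mul_two_pi_mul_I k
    rw [h1]
    simp

lemma key_integral {a : ℝ} (ha : 0 < a) {u : ℂ} (hu : ‖u‖ < 1) :
    ∫ θ in (0:ℝ)..(2*π), (‖1 - u * Complex.exp ((θ:ℂ) * I)‖) ^ (-(2*a))
      = 2 * π * ∑' n, (bc a n)^2 * (‖u‖ ^ 2) ^ n := by
  set r := ‖u‖ with hr
  have hr0 : 0 ≤ r := norm_nonneg u
  have habs : ∀ θ:ℝ, ‖u * Complex.exp ((θ:ℂ) * I)‖ = r := by
    intro θ
    rw [norm_mul, Complex.norm_exp]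
    simp [hr]
  have hnorm : ∀ θ:ℝ, ‖u * Complex.exp ((θ:ℂ) * I)‖ < 1 := by
    intro θ; rw [habs θ]; exact hu
  have hre : ∀ θ:ℝ, 0 < (1 - u * Complex.exp ((θ:ℂ) * I)).re := by
    intro θ
    have h1 : (u * Complex.exp ((θ:ℂ) * I)).re ≤ r := by
      rw [← habs θ]; exact Complex.re_le_norm _
    simp only [Complex.sub_re, Complex.one_re, Complex.mul_re]
    have : (u * Complex.exp ((θ:ℂ) * I)).re = (u * Complex.exp ((θ:ℂ) * I)).re := rfl
    simp only [Complex.mul_re] at h1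
    linarith
  have hne : ∀ θ:ℝ, 1 - u * Complex.exp ((θ:ℂ) * I) ≠ 0 := by
    intro θ h
    have := hre θ
    rw [h] at this
    simp at this
  have hbge : ∀ θ:ℝ, 1 - r ≤ ‖1 - u * Complex.exp ((θ:ℂ) * I)‖ := by
    intro θ
    have := norm_sub_norm_le (1:ℂ) (u * Complex.exp ((θ:ℂ) * I))
    simpa [habs θ] using this
  set F : ℝ → ℂ := fun θ => (1 - u * Complex.exp ((θ:ℂ) * I)) ^ (-(a:ℂ)) with hF
  have hFsum : ∀ θ:ℝ, HasSum (fun n => (bc a n:ℂ) * (u * Complex.exp ((θ:ℂ) * I))^n) (F θ) :=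
    fun θ => hasSum_binomial a (hnorm θ)
  have habsF : ∀ θ:ℝ, ‖F θ‖
      = (‖1 - u * Complex.exp ((θ:ℂ) * I)‖) ^ (-a) := by
    intro θ
    rw [hF]
    rw [Complex.norm_cpow_of_ne_zero (hne θ)]
    simp
  have hFcont : Continuous F := by
    apply Continuous.cpow
    · exact continuous_const.sub (continuous_const.mul (Complex.continuous_exp.comp
        (Complex.continuous_ofReal.mul continuous_const)))
    · exact continuous_const
    · exact fun θ => Or.inl (hre θ)
  set v := (starRingEnd ℂ) u with hv
  have hvabs : ‖v‖ = r := by rw [hv, Complex.norm_conj]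
  have hconj : ∀ θ:ℝ, HasSum (fun n => (bc a n:ℂ) * (v * Complex.exp (-(θ:ℂ) * I))^n)
      ((starRingEnd ℂ) (F θ)) := by
    intro θ
    have := Complex.hasSum_conj'.mpr (hFsum θ)
    convert this using 2 with n
    simp only [map_mul, map_pow, Complex.conj_ofReal, ← Complex.exp_conj]
    congr 2
    simp [Complex.ext_iff, hv]
  set M : ℝ := (1 - r)^(-a) with hM
  have hFle : ∀ θ:ℝ, ‖F θ‖ ≤ M := by
    intro θ
    rw [habsF θ, hM]
    exact Real.rpow_le_rpow_of_nonpos (by linarith) (hbge θ) (by linarith)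
  set S : Set ℝ := Set.Ioc 0 (2*π) with hS
  have hSvol : (volume S).toReal = 2*π := by
    rw [hS, Real.volume_Ioc]
    rw [ENNReal.toReal_ofReal (by linarith [Real.pi_pos])]
    ring
  set h : ℕ → ℕ → ℝ → ℂ := fun m n θ =>
    (bc a m:ℂ) * (u * Complex.exp ((θ:ℂ) * I))^m
      * ((bc a n:ℂ) * (v * Complex.exp (-(θ:ℂ) * I))^n) with hh
  have hcont : ∀ m n, Continuous (h m n) := by
    intro m n
    apply Continuous.mul
    · exact continuous_const.mul ((continuous_const.mul (Complex.continuous_exp.comp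
        (Complex.continuous_ofReal.mul continuous_const))).pow m)
    · exact continuous_const.mul ((continuous_const.mul (Complex.continuous_exp.comp
        ((Complex.continuous_ofReal.neg).mul continuous_const))).pow n)
  have hnormh : ∀ m n θ, ‖h m n θ‖ = bc a m * bc a n * (r^m * r^n) := by
    intro m n θ
    have e1 : ‖v * Complex.exp (-(θ:ℂ) * I)‖ = r := by
      rw [norm_mul, Complex.norm_exp, hvabs]
      simp
    have e2 : ‖(bc a m : ℂ)‖ = bc a m := by
      rw [Complex.norm_real, Real.norm_eq_abs, abs_of_pos (bc_pos ha m)]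
    have e3 : ‖(bc a n : ℂ)‖ = bc a n := by
      rw [Complex.norm_real, Real.norm_eq_abs, abs_of_pos (bc_pos ha n)]
    have e4 : ‖Complex.exp ((θ:ℂ) * I)‖ = 1 := by rw [Complex.norm_exp]; simp
    have e5 : ‖Complex.exp (-(θ:ℂ) * I)‖ = 1 := by rw [Complex.norm_exp]; simp
    rw [hh]
    simp only [norm_mul, norm_pow, habs θ, e1, e2, e3, e4, e5, map_mul,
      hvabs, ← hr, one_pow]
    ring
  have hinth : ∀ m n, ∫ θ in S, h m n θ
      = (bc a m:ℂ) * (bc a n:ℂ) * u^m * v^n * (if (m:ℤ) = n then (2*π:ℂ) else 0) := by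
    intro m n
    have hptw : ∀ θ:ℝ, h m n θ = ((bc a m:ℂ) * (bc a n:ℂ) * u^m * v^n)
        * Complex.exp ((((m:ℤ) - (n:ℤ) : ℤ):ℂ) * θ * I) := by
      intro θ
      rw [hh]
      simp only [mul_pow, ← Complex.exp_nat_mul]
      push_cast
      rw [show ((m:ℂ) - (n:ℂ)) * θ * I = (m:ℂ) * ((θ:ℂ) * I) + (n:ℂ) * (-(θ:ℂ) * I) by ring,
        Complex.exp_add]
      ring
    simp_rw [hptw]
    rw [MeasureTheory.integral_const_mul]
    rw [← intervalIntegral.integral_of_le (by positivity : (0:ℝ) ≤ 2*π)]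
    rw [integral_exp_int_mul ((m:ℤ) - (n:ℤ))]
    simp only [sub_eq_zero]
  have hIntOn : ∀ (f : ℝ → ℂ), Continuous f → IntegrableOn f S volume := by
    intro f hf
    exact (hf.continuousOn).integrableOn_Icc.mono_set Set.Ioc_subset_Icc_self
  set g : ℕ → ℝ → ℂ := fun m θ =>
    (bc a m:ℂ) * (u * Complex.exp ((θ:ℂ) * I))^m * ((starRingEnd ℂ) (F θ)) with hg
  have hrlt : |r| < 1 := by rwa [_root_.abs_of_nonneg hr0]
  have hsum_r : Summable (fun n => bc a n * r ^ n) := (hasSum_binomial_real a hrlt).summable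
  have hgcont : ∀ m, Continuous (g m) := by
    intro m
    exact (continuous_const.mul ((continuous_const.mul (Complex.continuous_exp.comp
      (Complex.continuous_ofReal.mul continuous_const))).pow m)).mul
      (Complex.continuous_conj.comp hFcont)
  have hinner : ∀ m, ∫ θ in S, g m θ = (2*π:ℂ) * ((bc a m:ℂ))^2 * (u*v)^m := by
    intro m
    have hpt : ∀ θ, g m θ = ∑' n, h m n θ := by
      intro θ
      exact (((hconj θ).mul_left ((bc a m:ℂ) * (u * Complex.exp ((θ:ℂ) * I))^m)).tsum_eq).symm
    calc ∫ θ in S, g m θ = ∫ θ in S, ∑' n, h m n θ := by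
          congr 1; funext θ; exact hpt θ
      _ = ∑' n, ∫ θ in S, h m n θ := by
          refine (MeasureTheory.integral_tsum_of_summable_integral_norm
            (fun n => hIntOn _ (hcont m n)) ?_).symm
          have hval : ∀ n, ∫ θ in S, ‖h m n θ‖ = (2*π * bc a m * r^m) * (bc a n * r^n) := by
            intro n
            simp_rw [hnormh m n]
            rw [MeasureTheory.setIntegral_const, MeasureTheory.measureReal_def, hSvol, smul_eq_mul]
            ring
          simp_rw [hval]
          exact hsum_r.mul_left _
      _ = (2*π:ℂ) * ((bc a m:ℂ))^2 * (u*v)^m := by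
          simp_rw [hinth m]
          rw [tsum_eq_single m]
          · rw [if_pos rfl]
            rw [mul_pow]
            ring
          · intro n hn
            rw [if_neg (by exact_mod_cast (Ne.symm hn)), mul_zero]
  have houter : ∫ θ in S, F θ * (starRingEnd ℂ) (F θ)
      = (2*π:ℂ) * ((∑' n, (bc a n)^2 * (r^2)^n : ℝ) : ℂ) := by
    have hpt : ∀ θ, F θ * (starRingEnd ℂ) (F θ) = ∑' m, g m θ := by
      intro θ
      exact (((hFsum θ).mul_right ((starRingEnd ℂ) (F θ))).tsum_eq).symm
    calc ∫ θ in S, F θ * (starRingEnd ℂ) (F θ) = ∫ θ in S, ∑' m, g m θ := by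
          congr 1; funext θ; exact hpt θ
      _ = ∑' m, ∫ θ in S, g m θ := by
          refine (MeasureTheory.integral_tsum_of_summable_integral_norm
            (fun m => hIntOn _ (hgcont m)) ?_).symm
          apply Summable.of_nonneg_of_le
            (fun m => MeasureTheory.integral_nonneg (fun θ => norm_nonneg _))
            (fun m => ?_) (hsum_r.mul_left (2*π*M))
          have hle : ∀ θ ∈ S, ‖g m θ‖ ≤ bc a m * r^m * M := by
            intro θ _
            have e2 : ‖(bc a m : ℂ)‖ = bc a m := by
              rw [Complex.norm_real, Real.norm_eq_abs, abs_of_pos (bc_pos ha m)]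
            have e6 : ‖u‖ * ‖Complex.exp ((θ:ℂ) * I)‖ = r :=
              (norm_mul u (Complex.exp ((θ:ℂ) * I))).symm.trans (habs θ)
            rw [hg]
            simp only [norm_mul, norm_pow, e2, Complex.norm_conj]
            rw [e6]
            exact mul_le_mul_of_nonneg_left (hFle θ)
              (mul_nonneg (bc_pos ha m).le (pow_nonneg hr0 m))
          calc ∫ θ in S, ‖g m θ‖ ≤ ∫ θ in S, (bc a m * r^m * M) := by
                apply MeasureTheory.setIntegral_mono_on
                  ((hIntOn _ (hgcont m)).norm) (MeasureTheory.integrableOn_const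
                    (by rw [hS, Real.volume_Ioc]; exact ENNReal.ofReal_ne_top))
                  measurableSet_Ioc hle
            _ = 2*π*M*(bc a m * r^m) := by
                rw [MeasureTheory.setIntegral_const, MeasureTheory.measureReal_def, hSvol, smul_eq_mul]; ring
      _ = (2*π:ℂ) * ((∑' n, (bc a n)^2 * (r^2)^n : ℝ) : ℂ) := by
          simp_rw [hinner]
          have huv : u * v = ((r^2 : ℝ) : ℂ) := by
            rw [hv, Complex.mul_conj, Complex.normSq_eq_norm_sq, ← hr]
          simp_rw [huv]
          have hterm : ∀ m:ℕ, (2*π:ℂ) * ((bc a m:ℂ))^2 * ((r^2:ℝ):ℂ)^m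
              = (2*π:ℂ) * ((((bc a m)^2 * (r^2)^m : ℝ)):ℂ) := by
            intro m; push_cast; ring
          simp_rw [hterm]
          rw [tsum_mul_left, Complex.ofReal_tsum]
  have hpt2 : ∀ θ:ℝ, ((‖1 - u * Complex.exp ((θ:ℂ) * I)‖ ^ (-(2*a)) : ℝ) : ℂ)
      = F θ * (starRingEnd ℂ) (F θ) := by
    intro θ
    rw [Complex.mul_conj, Complex.normSq_eq_norm_sq, habsF θ]
    congr 1
    rw [← Real.rpow_natCast (‖1 - u * Complex.exp ((θ:ℂ) * I)‖ ^ (-a)) 2,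
      ← Real.rpow_mul (norm_nonneg _)]
    norm_num
    ring_nf
  have hfinal : ((∫ θ in (0:ℝ)..(2*π),
      (‖1 - u * Complex.exp ((θ:ℂ) * I)‖) ^ (-(2*a)) : ℝ) : ℂ)
      = ((2 * π * ∑' n, (bc a n)^2 * (r^2)^n : ℝ) : ℂ) := by
    rw [← intervalIntegral.integral_ofReal]
    simp_rw [hpt2]
    rw [intervalIntegral.integral_of_le (by positivity : (0:ℝ) ≤ 2*π), ← hS, houter]
    push_cast
    ring
  exact_mod_cast hfinal

/-- For `s ≥ 1` with `s ≠ 2`, `p = 4/s`, and `0 < |w| < 1`, the inequality is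
strict: `(1/2π) ∫₀^{2π} |1 - w̄ e^{iθ}|^{-p} dθ < (1 - |w|²)^{-p/s}`. -/
theorem szego_kernel_pth_mean_bound_strict
    (s : ℝ) (hs : 1 ≤ s) (hs2 : s ≠ 2) (p : ℝ) (hp : p = 4 / s)
    (w : ℂ) (hw0 : 0 < ‖w‖) (hw1 : ‖w‖ < 1) :
    (2 * Real.pi)⁻¹ * ∫ θ in (0:ℝ)..(2 * Real.pi),
        (‖1 - (starRingEnd ℂ) w * Complex.exp ((θ : ℂ) * Complex.I)‖) ^ (-p)
      < (1 - ‖w‖ ^ 2) ^ (-(p / s)) := by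
  have hs0 : (0:ℝ) < s := lt_of_lt_of_le one_pos hs
  set a : ℝ := 2 / s with ha_def
  have ha : 0 < a := by positivity
  have ha1 : a ≠ 1 := by
    rw [ha_def]
    intro h
    apply hs2
    field_simp at h
    linarith
  have hpa : p = 2 * a := by rw [hp, ha_def]; ring
  have hps : -(p / s) = -(a ^ 2) := by
    rw [hp, ha_def]
    field_simp
    ring
  set u : ℂ := (starRingEnd ℂ) w with hu_def
  have huabs : ‖u‖ = ‖w‖ := Complex.norm_conj w
  have hu : ‖u‖ < 1 := by rwa [huabs]
  have key := key_integral ha hu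
  rw [huabs] at key
  rw [hpa] at *
  rw [key]
  have hx0 : 0 < ‖w‖ ^ 2 := by positivity
  have hx1 : ‖w‖ ^ 2 < 1 := by nlinarith
  have hxlt : |‖w‖ ^ 2| < 1 := by
    rw [_root_.abs_of_nonneg hx0.le]; exact hx1
  have hRHS := hasSum_binomial_real (a^2) hxlt
  rw [hps, ← hRHS.tsum_eq]
  have hT : ∀ T : ℝ, (2 * π)⁻¹ * (2 * π * T) = T := by
    intro T
    rw [← mul_assoc, inv_mul_cancel₀ (by positivity), one_mul]
  rw [hT]
  have hgsum : Summable (fun n => bc (a^2) n * (‖w‖ ^2) ^ n) := hRHS.summable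
  have hle : ∀ n, (bc a n)^2 * (‖w‖ ^2)^n ≤ bc (a^2) n * (‖w‖^2)^n :=
    fun n => mul_le_mul_of_nonneg_right (bc_sq_le ha n) (pow_nonneg hx0.le n)
  have hfsum : Summable (fun n => (bc a n)^2 * (‖w‖ ^2)^n) :=
    Summable.of_nonneg_of_le (fun n => by positivity) hle hgsum
  exact Summable.tsum_lt_tsum hle (mul_lt_mul_of_pos_right (bc_sq_lt_two ha ha1) (pow_pos hx0 2))
    hfsum hgsum
end
end

section
/- For every p > 0 there exists w ∈ (0,1) with the following properties: the Poisson kernel P_w(e^{iθ}) = (1 − w²)/|1 − w e^{iθ}|² satisfies P_w ≥ 0 and ‖P_w‖₁ = 1; the function k_w(e^{iθ}) = (1 − w e^{iθ})^{−1} is the Riesz projection of P_w (indeed P̂_w(n) = w^{|n|} for n ∈ ℤ); and ‖k_w‖_p > 1 = ‖P_w‖₁. In particular, for no p > 0 does the contractive inequality ‖P₊ψ‖_p ≤ ‖ψ‖₁ hold for all ψ ∈ L¹(𝕋), so the critical exponent satisfies 𝔭(1) ≤ 0 (and together with the geometric-mean bound, 𝔭(1) = 0). -/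
open MeasureTheory Real Complex AddCircle

noncomputable section

/-- The Poisson kernel at `w ∈ (0,1)`: `P_w(e^{iθ}) = (1 - w²)/|1 - w e^{iθ}|²`
(as a complex-valued function on the circle). -/
def poissonKer (w : ℝ) : AddCircle (2 * Real.pi) → ℂ := fun x =>
  (((1 - w ^ 2) / ‖1 - (w : ℂ) * fourier 1 x‖ ^ 2 : ℝ) : ℂ)

/-- The Szegő kernel at `w ∈ (0,1)`: `k_w(e^{iθ}) = (1 - w e^{iθ})⁻¹`. -/
def szegoKer (w : ℝ) : AddCircle (2 * Real.pi) → ℂ := fun x =>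
  (1 - (w : ℂ) * fourier 1 x)⁻¹

namespace CritExpAux

local notation "𝕋" => AddCircle (2 * Real.pi)

variable {w : ℝ}

lemma abs_fourier (n : ℤ) (x : 𝕋) : ‖fourier n x‖ = 1 := Circle.norm_coe _

lemma fourier_one_pow (n : ℕ) (x : 𝕋) : (fourier 1 x) ^ n = fourier (n : ℤ) x := by
  induction n with
  | zero => simp [fourier_zero]
  | succ k ih => rw [pow_succ, ih, ← fourier_add]; norm_num

lemma abs_u (hw0 : 0 ≤ w) (x : 𝕋) : ‖(w : ℂ) * fourier 1 x‖ = w := by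
  rw [norm_mul, abs_fourier, mul_one, Complex.norm_real, Real.norm_of_nonneg hw0]

lemma abs_denom_pos (hw0 : 0 ≤ w) (hw1 : w < 1) (x : 𝕋) :
    0 < ‖1 - (w : ℂ) * fourier 1 x‖ := by
  have h1 : ‖(w : ℂ) * fourier 1 x‖ = w := abs_u hw0 x
  have h2 := norm_sub_norm_le (1 : ℂ) ((w : ℂ) * fourier 1 x)
  rw [norm_one, h1] at h2
  linarith

lemma denom_ne (hw0 : 0 ≤ w) (hw1 : w < 1) (x : 𝕋) :
    (1 : ℂ) - (w : ℂ) * fourier 1 x ≠ 0 := by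
  intro h
  have := abs_denom_pos hw0 hw1 x
  rw [h, norm_zero] at this
  exact lt_irrefl 0 this

lemma cont_denom : Continuous fun x : 𝕋 => (1 : ℂ) - (w : ℂ) * fourier 1 x :=
  continuous_const.sub (continuous_const.mul (fourier 1).continuous)

lemma cont_szego (hw0 : 0 ≤ w) (hw1 : w < 1) : Continuous (szegoKer w) :=
  cont_denom.inv₀ (fun x => denom_ne hw0 hw1 x)

lemma cont_poisson (hw0 : 0 ≤ w) (hw1 : w < 1) : Continuous (poissonKer w) := by
  apply Complex.continuous_ofReal.comp
  apply Continuous.div continuous_const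
  · exact (continuous_norm.comp cont_denom).pow 2
  · intro x
    exact pow_ne_zero 2 (abs_denom_pos hw0 hw1 x).ne'

lemma integrable_of_continuous {f : 𝕋 → ℂ} (hf : Continuous f) :
    Integrable f haarAddCircle :=
  hf.integrable_of_hasCompactSupport (HasCompactSupport.of_compactSpace f)

lemma integral_fourier (n : ℤ) :
    (∫ x : 𝕋, fourier n x ∂haarAddCircle) = if n = 0 then 1 else 0 := by
  split_ifs with h
  · subst h
    simp only [fourier_zero]
    simp
  · exact integral_eq_zero_of_add_right_eq_neg
      (fourier_add_half_inv_index h (by positivity : (0:ℝ) < 2 * Real.pi))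

variable (p : ℝ)

lemma hasSum_szego (hw0 : 0 ≤ w) (hw1 : w < 1) (x : 𝕋) :
    HasSum (fun n : ℕ => (w : ℂ) ^ n * fourier (n : ℤ) x) (szegoKer w x) := by
  have h : ‖(w : ℂ) * fourier 1 x‖ < 1 := by
    rw [abs_u hw0]; exact hw1
  have := hasSum_geometric_of_norm_lt_one h
  have he : (fun n : ℕ => ((w : ℂ) * fourier 1 x) ^ n)
      = fun n : ℕ => (w : ℂ) ^ n * fourier (n : ℤ) x := by
    funext n; rw [mul_pow, fourier_one_pow]
  rw [he] at this; exact this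

lemma szego_coeff (hw0 : 0 ≤ w) (hw1 : w < 1) (n : ℤ) :
    fourierCoeff (szegoKer w) n = if 0 ≤ n then ((w ^ n.toNat : ℝ) : ℂ) else 0 := by
  have habs : ∀ (m : ℤ) (x : 𝕋), ‖fourier m x‖ = 1 := by
    intro m x; rw [abs_fourier]
  have hint : ∀ m : ℕ, Integrable (fun x : 𝕋 => (w : ℂ) ^ m * fourier ((m : ℤ) - n) x)
      haarAddCircle := fun m =>
    integrable_of_continuous (continuous_const.mul (fourier _).continuous)
  have hnorm : ∀ m : ℕ, (∫ x : 𝕋, ‖(w : ℂ) ^ m * fourier ((m : ℤ) - n) x‖ ∂haarAddCircle)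
      = w ^ m := by
    intro m
    have : ∀ x : 𝕋, ‖(w : ℂ) ^ m * fourier ((m : ℤ) - n) x‖ = w ^ m := by
      intro x
      rw [norm_mul, habs, mul_one, norm_pow, Complex.norm_real,
        Real.norm_of_nonneg hw0]
    simp only [this]
    simp
  have hsum : Summable fun m : ℕ => ∫ x : 𝕋, ‖(w : ℂ) ^ m * fourier ((m : ℤ) - n) x‖
      ∂haarAddCircle := by
    simp only [hnorm]
    exact summable_geometric_of_lt_one hw0 hw1
  have hptsum : ∀ x : 𝕋, (∑' m : ℕ, (w : ℂ) ^ m * fourier ((m : ℤ) - n) x)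
      = fourier (-n) x • szegoKer w x := by
    intro x
    have h1 := (hasSum_szego hw0 hw1 x).mul_left (fourier (-n) x)
    have h2 : (fun m : ℕ => fourier (-n) x * ((w : ℂ) ^ m * fourier (m : ℤ) x))
        = fun m : ℕ => (w : ℂ) ^ m * fourier ((m : ℤ) - n) x := by
      funext m
      rw [sub_eq_add_neg, add_comm, fourier_add]
      ring
    rw [h2] at h1
    rw [h1.tsum_eq, smul_eq_mul]
  have key := integral_tsum_of_summable_integral_norm hint hsum
  rw [fourierCoeff]
  simp only [hptsum] at key
  rw [← key]
  have hterm : ∀ m : ℕ, (∫ x : 𝕋, (w : ℂ) ^ m * fourier ((m : ℤ) - n) x ∂haarAddCircle)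
      = if (m : ℤ) = n then ((w ^ m : ℝ) : ℂ) else 0 := by
    intro m
    rw [integral_const_mul, integral_fourier]
    by_cases h : (m : ℤ) = n
    · rw [if_pos (by omega), if_pos h]; push_cast; ring
    · rw [if_neg (by omega), if_neg h]; ring
  simp only [hterm]
  split_ifs with h
  · rw [tsum_eq_single n.toNat]
    · rw [if_pos (by omega)]
    · intro m hm
      rw [if_neg (by omega)]
  · have hz : ∀ i : ℕ, (if (i : ℤ) = n then ((w ^ i : ℝ) : ℂ) else 0) = 0 :=
      fun i => if_neg (by omega)
    simp only [hz, tsum_zero]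
lemma conj_coeff (f : 𝕋 → ℂ) (_hf : Integrable f haarAddCircle) (n : ℤ) :
    fourierCoeff (fun x => (starRingEnd ℂ) (f x)) n = (starRingEnd ℂ) (fourierCoeff f (-n)) := by
  rw [fourierCoeff, fourierCoeff, ← integral_conj]
  congr 1
  funext x
  rw [smul_eq_mul, smul_eq_mul, map_mul, neg_neg, ← fourier_neg]

lemma const_coeff (n : ℤ) :
    fourierCoeff (fun _ : 𝕋 => (1 : ℂ)) n = if n = 0 then 1 else 0 := by
  rw [fourierCoeff]
  simp only [smul_eq_mul, mul_one]
  rw [integral_fourier]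
  simp [neg_eq_zero]

lemma poisson_eq (hw0 : 0 ≤ w) (hw1 : w < 1) (x : 𝕋) :
    poissonKer w x = szegoKer w x + (starRingEnd ℂ) (szegoKer w x) - 1 := by
  have hd := denom_ne hw0 hw1 x
  have hzz : fourier 1 x * (starRingEnd ℂ) (fourier 1 x) = 1 := by
    rw [Complex.mul_conj]
    norm_cast
    rw [← Complex.sq_norm, abs_fourier]
    norm_num
  have habs : ((‖1 - (w : ℂ) * fourier 1 x‖ : ℝ) : ℂ) ^ 2
      = (1 - (w : ℂ) * fourier 1 x) * (starRingEnd ℂ) (1 - (w : ℂ) * fourier 1 x) := by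
    rw [Complex.mul_conj]
    norm_cast
    rw [← Complex.sq_norm]
  rw [poissonKer, szegoKer, Complex.ofReal_div, Complex.ofReal_pow, habs,
    map_inv₀, map_sub, map_one, map_mul, Complex.conj_ofReal]
  set z : ℂ := fourier 1 x with hz
  have hdc : (1 : ℂ) - (w : ℂ) * (starRingEnd ℂ) z ≠ 0 := by
    intro h
    apply hd
    have h2 := congrArg (starRingEnd ℂ) h
    simpa using h2
  push_cast
  field_simp
  ring_nf
  linear_combination ((w : ℂ) ^ 2) * hzz

lemma poisson_coeff (hw0 : 0 ≤ w) (hw1 : w < 1) (n : ℤ) :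
    fourierCoeff (poissonKer w) n = ((w ^ n.natAbs : ℝ) : ℂ) := by
  have hcz : Continuous (szegoKer w) := cont_szego hw0 hw1
  have intA : Integrable (fun x : 𝕋 => fourier (-n) x * szegoKer w x) haarAddCircle :=
    integrable_of_continuous ((fourier (-n)).continuous.mul hcz)
  have intB : Integrable (fun x : 𝕋 => fourier (-n) x * (starRingEnd ℂ) (szegoKer w x))
      haarAddCircle :=
    integrable_of_continuous ((fourier (-n)).continuous.mul (Complex.continuous_conj.comp hcz))
  have intC : Integrable (fun x : 𝕋 => fourier (-n) x * 1) haarAddCircle :=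
    integrable_of_continuous ((fourier (-n)).continuous.mul continuous_const)
  have hsplit : fourierCoeff (poissonKer w) n
      = fourierCoeff (szegoKer w) n
        + fourierCoeff (fun x => (starRingEnd ℂ) (szegoKer w x)) n
        - fourierCoeff (fun _ : 𝕋 => (1 : ℂ)) n := by
    have intAB : Integrable (fun x : 𝕋 => (fourier (-n)) x * szegoKer w x
        + (fourier (-n)) x * (starRingEnd ℂ) (szegoKer w x)) haarAddCircle := intA.add intB
    simp only [fourierCoeff, smul_eq_mul]
    have hpt : ∀ x : 𝕋, (fourier (-n)) x * poissonKer w x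
        = ((fourier (-n)) x * szegoKer w x
            + (fourier (-n)) x * (starRingEnd ℂ) (szegoKer w x))
          - (fourier (-n)) x * 1 := by
      intro x
      rw [poisson_eq hw0 hw1 x]
      ring
    simp only [hpt]
    rw [integral_sub intAB intC, integral_add intA intB]
  rw [hsplit, szego_coeff hw0 hw1, conj_coeff _ (integrable_of_continuous hcz),
    szego_coeff hw0 hw1, const_coeff]
  rcases lt_trichotomy n 0 with h | h | h
  · rw [if_neg (by omega), if_pos (by omega), if_neg (by omega)]
    rw [Complex.conj_ofReal]
    have : (-n).toNat = n.natAbs := by omega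
    rw [this]
    ring
  · subst h
    norm_num
  · rw [if_pos (by omega), if_neg (by omega), if_neg (by omega)]
    rw [map_zero]
    have : n.toNat = n.natAbs := by omega
    rw [this]
    ring
lemma integral_abs_poisson (hw0 : 0 ≤ w) (hw1 : w < 1) :
    (∫ x : 𝕋, ‖poissonKer w x‖ ∂haarAddCircle) = 1 := by
  have h0 : fourierCoeff (poissonKer w) 0 = 1 := by
    rw [poisson_coeff hw0 hw1]; norm_num
  have hP : (∫ x : 𝕋, poissonKer w x ∂haarAddCircle) = 1 := by
    rw [← h0, fourierCoeff]
    congr 1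
    funext x
    rw [neg_zero, fourier_zero, one_smul]
  set g : 𝕋 → ℝ := fun x => (1 - w ^ 2) / ‖1 - (w : ℂ) * fourier 1 x‖ ^ 2 with hg
  have hgnn : ∀ x, 0 ≤ g x := fun x => div_nonneg (by nlinarith) (by positivity)
  have habs : ∀ x : 𝕋, ‖poissonKer w x‖ = g x := fun x => by
    rw [poissonKer, Complex.norm_real, Real.norm_of_nonneg (hgnn x)]
  simp only [habs]
  have hint : Integrable (poissonKer w) haarAddCircle :=
    integrable_of_continuous (cont_poisson hw0 hw1)
  have h4 := integral_re (μ := haarAddCircle) hint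
  rw [hP] at h4
  simp only [RCLike.re_to_complex, Complex.one_re] at h4
  have h5 : ∀ x : 𝕋, (poissonKer w x).re = g x := by
    intro x
    rw [poissonKer, Complex.ofReal_re]
  simp only [h5] at h4
  exact h4

lemma integral_log_denom (hw0 : 0 ≤ w) (hw1 : w < 1) :
    (∫ x : 𝕋, Real.log (‖1 - (w : ℂ) * fourier 1 x‖) ∂haarAddCircle) = 0 := by
  have hslit : ∀ x : 𝕋, (1 - (w : ℂ) * fourier 1 x) ∈ Complex.slitPlane := by
    intro x
    left
    have h1 : ((w : ℂ) * fourier 1 x).re ≤ w := by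
      have h2 := Complex.re_le_norm ((w : ℂ) * fourier 1 x)
      rw [abs_u hw0] at h2
      exact h2
    have : (1 - (w : ℂ) * fourier 1 x).re = 1 - ((w : ℂ) * fourier 1 x).re := by
      simp [Complex.sub_re]
    rw [this]
    linarith
  have hcont : Continuous fun x : 𝕋 => Complex.log (1 - (w : ℂ) * fourier 1 x) :=
    cont_denom.clog hslit
  -- termwise
  have hint : ∀ m : ℕ, Integrable (fun x : 𝕋 => (w : ℂ) ^ m * fourier (m : ℤ) x / m)
      haarAddCircle := fun m =>
    integrable_of_continuous ((continuous_const.mul (fourier _).continuous).div_const _)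
  have hnormpt : ∀ (m : ℕ) (x : 𝕋), ‖(w : ℂ) ^ m * fourier (m : ℤ) x / m‖ = w ^ m / m := by
    intro m x
    rw [norm_div, norm_mul, norm_pow, Complex.norm_real, Real.norm_of_nonneg hw0,
      abs_fourier, mul_one, Complex.norm_natCast]
  have hnorm : ∀ m : ℕ, (∫ x : 𝕋, ‖(w : ℂ) ^ m * fourier (m : ℤ) x / m‖ ∂haarAddCircle)
      = w ^ m / m := by
    intro m
    simp only [hnormpt]
    simp
  have hsum : Summable fun m : ℕ =>
      ∫ x : 𝕋, ‖(w : ℂ) ^ m * fourier (m : ℤ) x / m‖ ∂haarAddCircle := by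
    simp only [hnorm]
    apply Summable.of_nonneg_of_le (fun m => by positivity)
      (fun m => ?_) (summable_geometric_of_lt_one hw0 hw1)
    rcases Nat.eq_zero_or_pos m with h | h
    · subst h; simp
    · apply div_le_self (by positivity)
      exact_mod_cast h
  have hpt : ∀ x : 𝕋, (∑' m : ℕ, (w : ℂ) ^ m * fourier (m : ℤ) x / m)
      = -Complex.log (1 - (w : ℂ) * fourier 1 x) := by
    intro x
    have hn : ‖(w : ℂ) * fourier 1 x‖ < 1 := by
      rw [abs_u hw0]; exact hw1
    have hs := Complex.hasSum_taylorSeries_neg_log hn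
    have he : (fun m : ℕ => ((w : ℂ) * fourier 1 x) ^ m / m)
        = fun m : ℕ => (w : ℂ) ^ m * fourier (m : ℤ) x / m := by
      funext m
      rw [mul_pow, fourier_one_pow]
    rw [he] at hs
    exact hs.tsum_eq
  have key := integral_tsum_of_summable_integral_norm hint hsum
  simp only [hpt] at key
  have hterm : ∀ m : ℕ, (∫ x : 𝕋, (w : ℂ) ^ m * fourier (m : ℤ) x / m ∂haarAddCircle)
      = 0 := by
    intro m
    have : (fun x : 𝕋 => (w : ℂ) ^ m * fourier (m : ℤ) x / m)
        = fun x : 𝕋 => ((w : ℂ) ^ m / m) * fourier (m : ℤ) x := by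
      funext x; ring
    rw [this, integral_const_mul, integral_fourier]
    rcases Nat.eq_zero_or_pos m with h | h
    · subst h; simp
    · rw [if_neg (by exact_mod_cast h.ne')]
      ring
  simp only [hterm, tsum_zero] at key
  have hclog : (∫ x : 𝕋, Complex.log (1 - (w : ℂ) * fourier 1 x) ∂haarAddCircle) = 0 := by
    have := key.symm
    rw [integral_neg] at this
    simpa using this
  have hre : ∀ x : 𝕋, Real.log (‖1 - (w : ℂ) * fourier 1 x‖)
      = RCLike.re (Complex.log (1 - (w : ℂ) * fourier 1 x)) := by
    intro x
    rw [RCLike.re_to_complex, Complex.log_re]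
  simp only [hre]
  rw [integral_re (integrable_of_continuous hcont), hclog]
  simp
lemma fourier_one_zero : fourier 1 (0 : 𝕋) = 1 := by simp [fourier_apply]

lemma key_gt (hw0 : 0 < w) (hw1 : w < 1) {p : ℝ} (hp : 0 < p) :
    1 < ∫ x : 𝕋, ‖szegoKer w x‖ ^ p ∂haarAddCircle := by
  set g : 𝕋 → ℝ := fun x => Real.log (‖szegoKer w x‖) * p with hgdef
  have habs : ∀ x : 𝕋, ‖szegoKer w x‖
      = (‖1 - (w : ℂ) * fourier 1 x‖)⁻¹ := fun x => by
    rw [szegoKer, norm_inv]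
  have habspos : ∀ x : 𝕋, 0 < ‖szegoKer w x‖ := fun x => by
    rw [habs]
    exact inv_pos.mpr (abs_denom_pos hw0.le hw1 x)
  have hcontg : Continuous g := by
    apply Continuous.mul _ continuous_const
    exact Real.continuous_log.comp
      ((continuous_norm.comp (cont_szego hw0.le hw1)).subtype_mk
        fun x => (habspos x).ne') |>.congr fun x => rfl
  have hgint : (∫ x : 𝕋, g x ∂haarAddCircle) = 0 := by
    have hgx : ∀ x : 𝕋, g x
        = (-p) * Real.log (‖1 - (w : ℂ) * fourier 1 x‖) := by
      intro x
      rw [hgdef]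
      simp only
      rw [habs, Real.log_inv]
      ring
    simp only [hgx]
    rw [integral_const_mul, integral_log_denom hw0.le hw1, mul_zero]
  set h : 𝕋 → ℝ := fun x => Real.exp (g x) - 1 - g x with hhdef
  have hconth : Continuous h := (Real.continuous_exp.comp hcontg).sub
    continuous_const |>.sub hcontg
  have hnn : ∀ x, 0 ≤ h x := by
    intro x
    have := Real.add_one_le_exp (g x)
    simp only [hhdef]
    linarith
  have hg0 : 0 < g 0 := by
    have h1 : ‖szegoKer w 0‖ = (1 - w)⁻¹ := by
      rw [habs, fourier_one_zero, mul_one]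
      have : ((1 : ℂ) - (w : ℂ)) = ((1 - w : ℝ) : ℂ) := by push_cast; ring
      rw [this, Complex.norm_real, Real.norm_of_nonneg (by linarith)]
    simp only [hgdef]
    apply mul_pos _ hp
    rw [h1, Real.log_inv, neg_pos]
    apply Real.log_neg (by linarith) (by linarith)
  have hh0 : 0 < h 0 := by
    have := Real.add_one_lt_exp hg0.ne'
    simp only [hhdef]
    linarith
  have hinth : Integrable h haarAddCircle :=
    hconth.integrable_of_hasCompactSupport (HasCompactSupport.of_compactSpace h)
  have hintg : Integrable g haarAddCircle :=
    hcontg.integrable_of_hasCompactSupport (HasCompactSupport.of_compactSpace g)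
  have hpos : 0 < ∫ x : 𝕋, h x ∂haarAddCircle := by
    rw [integral_pos_iff_support_of_nonneg hnn hinth]
    apply IsOpen.measure_pos
    · exact hconth.isOpen_support
    · exact ⟨0, hh0.ne'⟩
  have hrw : ∀ x : 𝕋, ‖szegoKer w x‖ ^ p = h x + (1 + g x) := by
    intro x
    rw [Real.rpow_def_of_pos (habspos x)]
    simp only [hhdef]
    ring
  simp only [hrw]
  rw [integral_add hinth (by
    exact (continuous_const.add hcontg).integrable_of_hasCompactSupport
      (HasCompactSupport.of_compactSpace _))]
  rw [integral_add (integrable_const 1) hintg, hgint, integral_const]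
  simp only [measure_univ, probReal_univ, ENNReal.toReal_one, smul_eq_mul, one_mul, add_zero]
  linarith

end CritExpAux

/-- For every `p > 0` there is `w ∈ (0,1)` such that the Poisson kernel `P_w`
is nonnegative with `‖P_w‖₁ = 1`, has Fourier coefficients `P̂_w(n) = w^{|n|}`, has the Szegő
kernel `k_w` as its Riesz projection, and yet `‖k_w‖_p > 1 = ‖P_w‖₁`.  Hence for no `p > 0` is
the Riesz projection a contraction from `L¹(𝕋)` into `L^p`, so `𝔭(1) ≤ 0` (and `𝔭(1) = 0`). -/
theorem critical_exponent_at_one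
    (p : ℝ) (hp : 0 < p) :
    ∃ w : ℝ, 0 < w ∧ w < 1 ∧
      (∀ x, 0 ≤ (poissonKer w x).re ∧ (poissonKer w x).im = 0) ∧
      (∫ x, ‖poissonKer w x‖ ∂haarAddCircle) = 1 ∧
      (∀ n : ℤ, fourierCoeff (poissonKer w) n = ((w ^ n.natAbs : ℝ) : ℂ)) ∧
      IsRieszProj (poissonKer w) (szegoKer w) ∧
      1 < (∫ x, ‖szegoKer w x‖ ^ p ∂haarAddCircle) ^ (1 / p) := by
  refine ⟨1/2, by norm_num, by norm_num, ?_, ?_, ?_, ?_, ?_⟩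
  · intro x
    constructor
    · rw [poissonKer, Complex.ofReal_re]
      apply div_nonneg (by norm_num) (by positivity)
    · rw [poissonKer, Complex.ofReal_im]
  · exact CritExpAux.integral_abs_poisson (by norm_num) (by norm_num)
  · exact CritExpAux.poisson_coeff (by norm_num) (by norm_num)
  · constructor
    · intro n hn
      rw [CritExpAux.szego_coeff (by norm_num) (by norm_num),
        CritExpAux.poisson_coeff (by norm_num) (by norm_num), if_pos hn]
      have : n.toNat = n.natAbs := by omega
      rw [this]
    · intro n hn
      rw [CritExpAux.szego_coeff (by norm_num) (by norm_num), if_neg (by omega)]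
  · have hkey := CritExpAux.key_gt (w := 1/2) (by norm_num) (by norm_num) hp
    have hXpos : (0:ℝ) < ∫ x, ‖szegoKer (1/2) x‖ ^ p ∂haarAddCircle :=
      lt_trans one_pos hkey
    rw [Real.one_lt_rpow_iff_of_pos hXpos]
    exact Or.inl ⟨hkey, by positivity⟩
end
end
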